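/- arXiv:1809.08845 — 3 statements merged into one kernel-verified Lean document; each statement's English description precedes it below -/
import Mathlib

section
/- For every vertex μ of Γ, the nonempty posterior branches emanating from μ are in one-to-one correspondence with the free vertices proximate to μ (each nonempty posterior branch of μ contains exactly one free vertex that is proximate to μ), and the anterior branches emanating from μ are in one-to-one correspondence with the vertices to which μ is proximate (each anterior branch of μ contains exactly one vertex to which μ is proximate). -/
open Matrix BigOperators

open scoped Classical

noncomputable section

/-- Proximity data of a dual graph on vertex set `Fin N`, built from a single
root vertex by a finite sequence of elementary modifications. Vertices are
ordered by creation; each new vertex is proximate to at most two existing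
(earlier) vertices, which must be adjacent to each other at that time if
there are two of them. -/
structure DualGraph where
  N : ℕ
  Npos : 0 < N
  prox : Fin N → Fin N → Prop
  prox_lt : ∀ {μ ν}, prox μ ν → ν < μ
  prox_card : ∀ μ, {ν | prox μ ν}.ncard ≤ 2
  prox_nonempty : ∀ μ : Fin N, 0 < (μ : ℕ) → ∃ ν, prox μ ν
  prox_pair : ∀ {μ a b}, prox μ a → prox μ b → a ≠ b →
      (prox a b ∨ prox b a) ∧ ∀ ρ, ρ < μ → ¬(prox ρ a ∧ prox ρ b)

namespace DualGraph

variable (G : DualGraph)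

/-- The proximity matrix `P`. -/
def P : Matrix (Fin G.N) (Fin G.N) ℚ :=
  fun μ ν => if μ = ν then 1 else if G.prox μ ν then -1 else 0

/-- `Q = P⁻¹`. -/
def Q : Matrix (Fin G.N) (Fin G.N) ℚ := (G.P)⁻¹

/-- The valuation matrix `V = (PᵀP)⁻¹`. -/
def V : Matrix (Fin G.N) (Fin G.N) ℚ := (G.Pᵀ * G.P)⁻¹

/-- Adjacency in the dual graph: `μ ∼ ν` iff `(PᵀP)_{μν} = -1`. -/
def adj (μ ν : Fin G.N) : Prop := μ ≠ ν ∧ (G.Pᵀ * G.P) μ ν = -1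

lemma adj_symm {μ ν : Fin G.N} (h : G.adj μ ν) : G.adj ν μ := by
  obtain ⟨hne, h2⟩ := h
  refine ⟨hne.symm, ?_⟩
  have ht : (G.Pᵀ * G.P)ᵀ = G.Pᵀ * G.P := by
    rw [Matrix.transpose_mul, Matrix.transpose_transpose]
  calc (G.Pᵀ * G.P) ν μ = (G.Pᵀ * G.P)ᵀ μ ν := rfl
    _ = (G.Pᵀ * G.P) μ ν := by rw [ht]
    _ = -1 := h2

/-- The dual graph as a simple graph. -/
def graph : SimpleGraph (Fin G.N) where
  Adj := G.adj
  symm := ⟨fun _ _ h => G.adj_symm h⟩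
  loopless := ⟨fun μ h => h.1 rfl⟩

/-- The graph distance `d(μ,ν)`. -/
def dist (μ ν : Fin G.N) : ℕ := G.graph.dist μ ν

/-- The set of vertices on the unique path `[μ,γ]` from `μ` to `γ`. -/
def pathSet (μ γ : Fin G.N) : Finset (Fin G.N) :=
  Finset.univ.filter (fun ν => G.dist μ ν + G.dist ν γ = G.dist μ γ)

/-- The branch `Γ^μ_ν` emanating from `μ` towards `ν`: the maximal connected
subgraph of `Γ` containing `ν` but not `μ` (with `Γ^μ_μ = ∅`). -/
def branch (μ ν : Fin G.N) : Finset (Fin G.N) :=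
  Finset.univ.filter (fun η => ν ≠ μ ∧ η ≠ μ ∧ μ ∉ G.pathSet ν η)

/-- The set of vertices adjacent to `μ`. -/
def nbrs (μ : Fin G.N) : Finset (Fin G.N) := Finset.univ.filter (fun ν => G.adj μ ν)

/-- The valence `v_Γ(μ)`: the number of vertices adjacent to `μ`. -/
def valence (μ : Fin G.N) : ℕ := (G.nbrs μ).card

/-- The weight `w_Γ(μ) = (PᵀP)_{μμ}`. -/
def w (μ : Fin G.N) : ℚ := (G.Pᵀ * G.P) μ μ

/-- The canonical vector `k`, `k_ν = Σ_μ q_{νμ}`. -/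
def kvec : Fin G.N → ℚ := fun ν => ∑ μ, G.Q ν μ

/-- A divisor with valuation vector `f` is antinef iff its factorization
vector `f̂ = f PᵀP` is nonnegative. -/
def Antinef (f : Fin G.N → ℚ) : Prop := ∀ ν, 0 ≤ (f ᵥ* (G.Pᵀ * G.P)) ν

/-- `λ(fE, gE; ν) = (f_ν + k_ν + 1)/g_ν` for divisors with valuation
vectors `f`, `g`. -/
def lamDiv (f g : Fin G.N → ℚ) (ν : Fin G.N) : ℚ := (f ν + G.kvec ν + 1) / g ν

/-- `ρ_{[μ,γ]}(ν) = V_{γν}/V_{μν}`. -/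
def rho (μ γ ν : Fin G.N) : ℚ := G.V γ ν / G.V μ ν

/-- `r̂_{[μ,γ]} = 𝟙_γ − ρ_{[μ,γ]}(μ)·𝟙_μ`. -/
def rhat (μ γ : Fin G.N) : Fin G.N → ℚ :=
  fun j => (if j = γ then 1 else 0) - G.rho μ γ μ * (if j = μ then 1 else 0)

/-- `φ_η^{[μ,γ]}(ν) = (r̂_{[μ,γ]}V)_ν / V_{ην}`. -/
def phi (η μ γ ν : Fin G.N) : ℚ := (G.rhat μ γ ᵥ* G.V) ν / G.V η ν

/-- The transform `f̂_{⟨ĝ⟩[ĥ]}` relative to the vertex `μ`. -/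
def transform (μ : Fin G.N) (fh gh hh : Fin G.N → ℚ) : Fin G.N → ℚ :=
  fh - (∑ i ∈ G.nbrs μ, ∑ j ∈ G.branch μ i, gh j • G.rhat i j)
     + ∑ i ∈ G.nbrs μ, hh i • G.rhat μ i

/-- The transform `f̂^𝒩 = f̂ − Σ_i f̂_i·r̂_{[μ,i]}` relative to the vertex `μ`. -/
def nmap (μ : Fin G.N) (fh : Fin G.N → ℚ) : Fin G.N → ℚ :=
  fh - ∑ i, fh i • G.rhat μ i

/-- A vertex is free if it is proximate to at most one vertex. -/
def Free (μ : Fin G.N) : Prop := {ν | G.prox μ ν}.ncard ≤ 1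

/-- `μ` is infinitely near to `ν` (written `ν ⊂ μ`): the reflexive-transitive
closure of proximity. -/
def InfNear (μ ν : Fin G.N) : Prop := Relation.ReflTransGen G.prox μ ν

/-- The root vertex. -/
def root : Fin G.N := ⟨0, G.Npos⟩

/-- The branch `Γ^μ_ν` is anterior to `μ` if `μ` is infinitely near to some of
its vertices; otherwise it is posterior. -/
def Anterior (μ ν : Fin G.N) : Prop := ∃ η ∈ G.branch μ ν, G.InfNear μ η

/-- The pair `(γ,τ)` associated to `μ`. -/
def PairAssociated (γ τ μ : Fin G.N) : Prop :=
  G.InfNear τ γ ∧ G.InfNear μ τ ∧ G.Free τ ∧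
  (∀ ν, G.Free ν → G.InfNear μ ν → G.InfNear τ ν) ∧
  ((¬ G.Free γ ∧ ∀ ν, ¬ G.Free ν → G.InfNear τ ν → G.InfNear γ ν) ∨
   ((∀ ν, G.InfNear τ ν → G.Free ν) ∧ γ = G.root))

/-- The entries of `V` as natural numbers (they are positive integers). -/
def Vnat (μ ν : Fin G.N) : ℕ := (G.V μ ν).num.toNat

/-- The submonoid `SV^μ_ν` of `ℕ` generated by `{V_{μi} : i ∈ Γ^μ_ν ∪ {μ}}`. -/
def SVb (μ ν : Fin G.N) : AddSubmonoid ℕ :=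
  AddSubmonoid.closure ↑((insert μ (G.branch μ ν)).image (G.Vnat μ))

/-- `s^μ_ν = gcd{V_{μi} : i ∈ Γ^μ_ν ∪ {μ}}`. -/
def sgcd (μ ν : Fin G.N) : ℕ := (insert μ (G.branch μ ν)).gcd (G.Vnat μ)

/-- The submonoid `S^μ` of `ℕ` generated by the `s^μ_ν`, `ν ∈ Γ`. -/
def Ssg (μ : Fin G.N) : AddSubmonoid ℕ :=
  AddSubmonoid.closure (Set.range (fun ν => G.sgcd μ ν))

/-- The valuation vector `d = d̂V` of the ideal with factorization vector `d̂`. -/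
def dval (dh : Fin G.N → ℕ) : Fin G.N → ℚ := (fun i => (dh i : ℚ)) ᵥ* G.V

/-- `λ(a,ν) = (a + k_ν + 1)/d_ν`. -/
def lamA (dh : Fin G.N → ℕ) (a : ℚ) (ν : Fin G.N) : ℚ :=
  (a + G.kvec ν + 1) / G.dval dh ν

/-- The set of jumping numbers of the ideal with factorization vector `d̂`
supported at the vertex `μ`. -/
def Hset (dh : Fin G.N → ℕ) (μ : Fin G.N) : Set ℚ :=
  { ξ | ∃ f : Fin G.N → ℤ, G.Antinef (fun i => (f i : ℚ)) ∧
      (∀ ν, G.lamA dh (f μ : ℚ) μ ≤ G.lamA dh (f ν : ℚ) ν) ∧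
      ξ = G.lamA dh (f μ : ℚ) μ }

end DualGraph
end

section AuxDG
open scoped Classical
open Matrix

namespace DualGraph

variable {G : DualGraph}

lemma prox_ne {a b : Fin G.N} (h : G.prox a b) : a ≠ b :=
  fun he => absurd (G.prox_lt h) (by simp [he])

lemma prox_asymm {a b : Fin G.N} (h : G.prox a b) (h' : G.prox b a) : False :=
  absurd ((G.prox_lt h').trans (G.prox_lt h)) (lt_irrefl _)

lemma sum_PtP {μ ν : Fin G.N} (hne : μ ≠ ν) :
    (G.Pᵀ * G.P) μ ν = (if G.prox μ ν then (-1:ℚ) else 0) + (if G.prox ν μ then (-1:ℚ) else 0)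
      + ((Finset.univ.filter (fun ρ => G.prox ρ μ ∧ G.prox ρ ν)).card : ℚ) := by
  classical
  have key : (G.Pᵀ * G.P) μ ν = ∑ ρ, G.P ρ μ * G.P ρ ν := by
    simp [Matrix.mul_apply, Matrix.transpose_apply]
  have hμ : G.P μ μ * G.P μ ν = (if G.prox μ ν then (-1:ℚ) else 0) := by
    simp [DualGraph.P, hne]
  have hν : G.P ν μ * G.P ν ν = (if G.prox ν μ then (-1:ℚ) else 0) := by
    simp [DualGraph.P, hne.symm]
  have hrest : ∀ ρ : Fin G.N, ρ ≠ μ → ρ ≠ ν →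
      G.P ρ μ * G.P ρ ν = (if G.prox ρ μ ∧ G.prox ρ ν then (1:ℚ) else 0) := by
    intro ρ h1 h2
    by_cases ha : G.prox ρ μ <;> by_cases hb : G.prox ρ ν <;>
      simp [DualGraph.P, h1, h2, ha, hb]
  have hν' : ν ∈ Finset.univ.erase μ := Finset.mem_erase.mpr ⟨hne.symm, Finset.mem_univ ν⟩
  have hsplit : ∑ ρ, G.P ρ μ * G.P ρ ν
      = (∑ ρ ∈ (Finset.univ.erase μ).erase ν, G.P ρ μ * G.P ρ ν)
        + G.P ν μ * G.P ν ν + G.P μ μ * G.P μ ν := by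
    rw [Finset.sum_erase_add _ _ hν', Finset.sum_erase_add _ _ (Finset.mem_univ μ)]
  have hsum2 : ∑ ρ ∈ (Finset.univ.erase μ).erase ν, G.P ρ μ * G.P ρ ν
      = ((((Finset.univ.erase μ).erase ν).filter (fun ρ => G.prox ρ μ ∧ G.prox ρ ν)).card : ℚ) := by
    rw [Finset.sum_congr rfl (fun ρ hρ => by
      have h1 := Finset.mem_erase.mp hρ
      have h2 := Finset.mem_erase.mp h1.2
      exact hrest ρ h2.1 h1.1)]
    rw [Finset.sum_boole]
  have hfilter : (((Finset.univ.erase μ).erase ν).filter (fun ρ => G.prox ρ μ ∧ G.prox ρ ν))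
      = Finset.univ.filter (fun ρ => G.prox ρ μ ∧ G.prox ρ ν) := by
    ext ρ
    simp only [Finset.mem_filter, Finset.mem_erase, Finset.mem_univ, true_and, and_true]
    constructor
    · tauto
    · intro h; exact ⟨⟨prox_ne h.2, prox_ne h.1⟩, h⟩
  rw [key, hsplit, hsum2, hfilter, hμ, hν]
  ring

lemma adj_iff {μ ν : Fin G.N} :
    G.adj μ ν ↔ (G.prox μ ν ∨ G.prox ν μ) ∧ ∀ ρ, ¬(G.prox ρ μ ∧ G.prox ρ ν) := by
  constructor
  · rintro ⟨hne, h⟩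
    rw [sum_PtP hne] at h
    set c := (Finset.univ.filter (fun ρ => G.prox ρ μ ∧ G.prox ρ ν)).card with hc
    have hcnn : (0:ℚ) ≤ (c:ℚ) := Nat.cast_nonneg c
    constructor
    · by_contra hor
      push_neg at hor
      rw [if_neg hor.1, if_neg hor.2] at h
      linarith
    · rintro ρ ⟨ha, hb⟩
      have hρc : 1 ≤ c := Finset.card_pos.mpr ⟨ρ, by simp [ha, hb]⟩
      have hρc' : (1:ℚ) ≤ (c:ℚ) := by exact_mod_cast hρc
      by_cases h1 : G.prox μ ν <;> by_cases h2 : G.prox ν μ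
      · exact prox_asymm h1 h2
      all_goals simp [h1, h2] at h; linarith
  · rintro ⟨hor, hno⟩
    have hne : μ ≠ ν := by
      rcases hor with h | h
      · exact prox_ne h
      · exact (prox_ne h).symm
    refine ⟨hne, ?_⟩
    rw [sum_PtP hne]
    have hcz : (Finset.univ.filter (fun ρ => G.prox ρ μ ∧ G.prox ρ ν)).card = 0 := by
      rw [Finset.card_eq_zero, Finset.filter_eq_empty_iff]
      intro ρ _
      exact hno ρ
    rcases hor with h | h
    · have h2 : ¬ G.prox ν μ := fun h' => prox_asymm h h'
      rw [if_pos h, if_neg h2, hcz]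
      norm_num
    · have h2 : ¬ G.prox μ ν := fun h' => prox_asymm h' h
      rw [if_neg h2, if_pos h, hcz]
      norm_num


/-- A step in the dual graph avoiding the vertex `μ`. -/
def AStep (G : DualGraph) (μ a b : Fin G.N) : Prop := G.adj a b ∧ a ≠ μ ∧ b ≠ μ

/-- Reachability avoiding the vertex `μ`. -/
def AReach (G : DualGraph) (μ x y : Fin G.N) : Prop :=
  Relation.ReflTransGen (G.AStep μ) x y

/-- A step avoiding the (unordered) edge `{a,b}`. -/
def EStep (G : DualGraph) (a b u v : Fin G.N) : Prop :=
  G.adj u v ∧ ¬(u = a ∧ v = b) ∧ ¬(u = b ∧ v = a)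

/-- Reachability avoiding the edge `{a,b}`. -/
def EReach (G : DualGraph) (a b x y : Fin G.N) : Prop :=
  Relation.ReflTransGen (G.EStep a b) x y

lemma AStep.symm {μ a b : Fin G.N} (h : G.AStep μ a b) : G.AStep μ b a :=
  ⟨G.adj_symm h.1, h.2.2, h.2.1⟩

lemma AReach.symm {μ x y : Fin G.N} (h : G.AReach μ x y) : G.AReach μ y x :=
  (@Relation.ReflTransGen.stdSymm _ _ ⟨fun _ _ hs => AStep.symm hs⟩).symm _ _ h

lemma AReach.trans {μ x y z : Fin G.N} (h : G.AReach μ x y) (h' : G.AReach μ y z) :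
    G.AReach μ x z := Relation.ReflTransGen.trans h h'

lemma EStep.symm {a b u v : Fin G.N} (h : G.EStep a b u v) : G.EStep a b v u :=
  ⟨G.adj_symm h.1, fun hh => h.2.2 ⟨hh.2, hh.1⟩, fun hh => h.2.1 ⟨hh.2, hh.1⟩⟩

lemma EReach.symm {a b x y : Fin G.N} (h : G.EReach a b x y) : G.EReach a b y x :=
  (@Relation.ReflTransGen.stdSymm _ _ ⟨fun _ _ hs => EStep.symm hs⟩).symm _ _ h

/-- Convert a walk avoiding `μ` into an `AReach` chain. -/
lemma aReach_of_walk {μ x y : Fin G.N} (W : G.graph.Walk x y) (hW : μ ∉ W.support) :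
    G.AReach μ x y := by
  induction W with
  | nil => exact Relation.ReflTransGen.refl
  | cons h p ih =>
    rw [SimpleGraph.Walk.support_cons, List.mem_cons] at hW
    push_neg at hW
    refine Relation.ReflTransGen.head ⟨h, fun he => hW.1 he.symm, ?_⟩ (ih hW.2)
    intro he
    exact hW.2 (he ▸ p.start_mem_support)

/-- Convert an `AReach` chain into a walk avoiding `μ`. -/
lemma walk_of_aReach {μ x y : Fin G.N} (h : G.AReach μ x y) (hy : y ≠ μ) :
    ∃ W : G.graph.Walk x y, μ ∉ W.support := by
  induction h using Relation.ReflTransGen.head_induction_on with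
  | refl => exact ⟨SimpleGraph.Walk.nil, by simp [hy.symm]⟩
  | head hs _ ih =>
    obtain ⟨W, hW⟩ := ih
    exact ⟨SimpleGraph.Walk.cons hs.1 W, by
      show μ ∉ _ :: W.support
      rw [List.mem_cons]
      push_neg
      exact ⟨hs.2.1.symm.symm.symm, hW⟩⟩

/-- Convert a walk avoiding the edge `{a,b}` into an `EReach` chain. -/
lemma eReach_of_walk {a b x y : Fin G.N} (W : G.graph.Walk x y) (hW : s(a,b) ∉ W.edges) :
    G.EReach a b x y := by
  induction W with
  | nil => exact Relation.ReflTransGen.refl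
  | @cons u v w h p ih =>
    rw [SimpleGraph.Walk.edges_cons, List.mem_cons] at hW
    push_neg at hW
    refine Relation.ReflTransGen.head ⟨h, ?_, ?_⟩ (ih hW.2)
    · rintro ⟨rfl, rfl⟩; exact hW.1 rfl
    · rintro ⟨rfl, rfl⟩; exact hW.1 (Sym2.eq_swap)

lemma infNear_le {μ γ : Fin G.N} (h : G.InfNear μ γ) : γ ≤ μ := by
  induction h with
  | refl => exact le_refl _
  | tail _ h2 ih => exact le_of_lt (lt_of_lt_of_le (G.prox_lt h2) ih)

lemma free_unique {ν a b : Fin G.N} (hf : G.Free ν) (ha : G.prox ν a) (hb : G.prox ν b) :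
    a = b := by
  by_contra hne
  have hsub : ({a, b} : Set (Fin G.N)) ⊆ {x | G.prox ν x} := by
    rintro x (rfl | rfl)
    · exact ha
    · exact hb
  have h2 : 2 ≤ ({x | G.prox ν x}).ncard := by
    rw [← Set.ncard_pair hne]
    exact Set.ncard_le_ncard hsub (Set.toFinite _)
  exact absurd (le_trans h2 hf) (by norm_num)

lemma exists_other_of_not_free {ν a : Fin G.N} (h : ¬ G.Free ν) (ha : G.prox ν a) :
    ∃ b, G.prox ν b ∧ b ≠ a := by
  by_contra h'
  push_neg at h'
  refine h (le_trans (Set.ncard_le_ncard (t := {a}) ?_ (Set.toFinite _))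
    (le_of_eq (Set.ncard_singleton a)))
  intro x hx
  exact h' x hx

/-- From `c ≻ d` there is a connection from `c` to `d` whose inner vertices are
all later than `c`; in particular it avoids any `μ < c` distinct from `d`. -/
lemma w1 : ∀ m : ℕ, ∀ c d μ : Fin G.N, G.N - c.1 ≤ m → G.prox c d → μ < c → μ ≠ d →
    G.AReach μ c d := by
  intro m
  induction m with
  | zero =>
    intro c d μ hm _ _ _
    exact absurd hm (by omega)
  | succ m ih =>
    intro c d μ hm hprox hlt hne
    by_cases hadj : G.adj c d
    · exact Relation.ReflTransGen.single ⟨hadj, ne_of_gt hlt, hne.symm⟩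
    · have : ¬ ((G.prox c d ∨ G.prox d c) ∧ ∀ ρ, ¬(G.prox ρ c ∧ G.prox ρ d)) :=
        fun hh => hadj (adj_iff.mpr hh)
      push_neg at this
      obtain ⟨ρ, hρc, hρd⟩ := this (Or.inl hprox)
      have hcρ : c < ρ := G.prox_lt hρc
      have h1 : G.AReach μ ρ c := by
        refine ih ρ c μ (by omega) hρc (hlt.trans hcρ) (ne_of_lt hlt)
      have h2 : G.AReach μ ρ d := by
        refine ih ρ d μ (by omega) hρd (lt_trans hlt hcρ) hne
      exact (h1.symm).trans h2
    
/-- Find a neighbour of `μ` reachable from `x` avoiding `μ`. -/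
lemma exists_nbr {x μ : Fin G.N} (hx : x ≠ μ) (h : Relation.ReflTransGen G.adj x μ) :
    ∃ w, G.adj w μ ∧ G.AReach μ x w := by
  have key : ∀ z, Relation.ReflTransGen G.adj x z →
      (z ≠ μ ∧ G.AReach μ x z) ∨ (∃ w, G.adj w μ ∧ G.AReach μ x w) := by
    intro z h
    induction h with
    | refl => exact Or.inl ⟨hx, Relation.ReflTransGen.refl⟩
    | @tail b c _ hbc ih =>
      rcases ih with ⟨hbne, hch⟩ | hr
      · by_cases hcμ : c = μ
        · exact Or.inr ⟨b, hcμ ▸ hbc, hch⟩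
        · exact Or.inl ⟨hcμ, hch.tail ⟨hbc, hbne, hcμ⟩⟩
      · exact Or.inr hr
  rcases key μ h with ⟨hh, _⟩ | hr
  · exact absurd rfl hh
  · exact hr

end DualGraph

/-- Extract a `t`-avoiding chain from a chain starting at `t`, when all steps at `t`
go to `u'`. -/
lemma extract_aux {α : Type*} {r : α → α → Prop} {t u' : α}
    (hstep : ∀ z, r t z → z = u') (hstep' : ∀ z, r z t → z = u') (hu' : u' ≠ t)
    {y : α} (h : Relation.ReflTransGen r t y) (hy : y ≠ t) :
    Relation.ReflTransGen (fun a b => r a b ∧ a ≠ t ∧ b ≠ t) u' y := by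
  have key : ∀ z, Relation.ReflTransGen r t z →
      z = t ∨ (z ≠ t ∧ Relation.ReflTransGen (fun a b => r a b ∧ a ≠ t ∧ b ≠ t) u' z) := by
    intro z h
    induction h with
    | refl => exact Or.inl rfl
    | @tail b c _ hbc ih =>
      rcases ih with rfl | ⟨hbne, hch⟩
      · have := hstep c hbc
        subst this
        exact Or.inr ⟨hu', Relation.ReflTransGen.refl⟩
      · by_cases hct : c = t
        · exact Or.inl hct
        · exact Or.inr ⟨hct, hch.tail ⟨hbc, hbne, hct⟩⟩
  rcases key y h with rfl | ⟨_, hch⟩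
  · exact absurd rfl hy
  · exact hch

/-- First hit of a set `S` along a chain. -/
lemma firsthit_aux {α : Type*} {r : α → α → Prop} {S : Set α} {x y : α}
    (h : Relation.ReflTransGen r x y) (hy : y ∈ S) :
    x ∈ S ∨ ∃ w z, z ∈ S ∧ w ∉ S ∧
      Relation.ReflTransGen (fun a b => r a b ∧ a ∉ S ∧ b ∉ S) x w ∧ r w z := by
  have key : ∀ z, Relation.ReflTransGen r x z →
      x ∈ S ∨ (z ∉ S ∧ Relation.ReflTransGen (fun a b => r a b ∧ a ∉ S ∧ b ∉ S) x z)
        ∨ (∃ w z', z' ∈ S ∧ w ∉ S ∧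
            Relation.ReflTransGen (fun a b => r a b ∧ a ∉ S ∧ b ∉ S) x w ∧ r w z') := by
    intro z h
    induction h with
    | refl =>
      by_cases hx : x ∈ S
      · exact Or.inl hx
      · exact Or.inr (Or.inl ⟨hx, Relation.ReflTransGen.refl⟩)
    | @tail b c _ hbc ih =>
      rcases ih with hx | ⟨hbS, hch⟩ | hr
      · exact Or.inl hx
      · by_cases hcS : c ∈ S
        · exact Or.inr (Or.inr ⟨b, c, hcS, hbS, hch, hbc⟩)
        · exact Or.inr (Or.inl ⟨hcS, hch.tail ⟨hbc, hbS, hcS⟩⟩)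
      · exact Or.inr (Or.inr hr)
  rcases key y h with hx | ⟨hyS, _⟩ | hr
  · exact Or.inl hx
  · exact absurd hy hyS
  · exact Or.inr hr


namespace DualGraph

variable {G : DualGraph}

/-- The truncation of a dual graph: drop the last vertex. -/
def trunc (G : DualGraph) (h2 : 2 ≤ G.N) : DualGraph where
  N := G.N - 1
  Npos := by omega
  prox x y := G.prox (Fin.castLE (Nat.sub_le G.N 1) x) (Fin.castLE (Nat.sub_le G.N 1) y)
  prox_lt := by
    intro μ ν h
    exact G.prox_lt h
  prox_card := by
    intro μ
    have hinj : Function.Injective (Fin.castLE (Nat.sub_le G.N 1)) := Fin.castLE_injective _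
    have h1 := Set.ncard_image_of_injective
      {ν : Fin (G.N-1) | G.prox (Fin.castLE (Nat.sub_le G.N 1) μ) (Fin.castLE (Nat.sub_le G.N 1) ν)}
      hinj
    have h2 : (Fin.castLE (Nat.sub_le G.N 1)) ''
        {ν : Fin (G.N-1) | G.prox (Fin.castLE (Nat.sub_le G.N 1) μ) (Fin.castLE (Nat.sub_le G.N 1) ν)}
        ⊆ {ν : Fin G.N | G.prox (Fin.castLE (Nat.sub_le G.N 1) μ) ν} := by
      rintro _ ⟨ν, hν, rfl⟩; exact hν
    have h3 := Set.ncard_le_ncard h2 (Set.toFinite _)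
    have h4 := G.prox_card (Fin.castLE (Nat.sub_le G.N 1) μ)
    show {ν : Fin (G.N-1) | G.prox (Fin.castLE (Nat.sub_le G.N 1) μ)
      (Fin.castLE (Nat.sub_le G.N 1) ν)}.ncard ≤ 2
    omega
  prox_nonempty := by
    intro μ hμ
    obtain ⟨ν, hν⟩ := G.prox_nonempty (Fin.castLE (Nat.sub_le G.N 1) μ) hμ
    have hlt : ν.1 < μ.1 := G.prox_lt hν
    have hν1 : ν.1 < G.N - 1 := by
      have := μ.2
      omega
    exact ⟨⟨ν.1, hν1⟩, hν⟩
  prox_pair := by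
    intro μ a b ha hb hne
    have hne' : Fin.castLE (Nat.sub_le G.N 1) a ≠ Fin.castLE (Nat.sub_le G.N 1) b :=
      fun h => hne (Fin.castLE_injective _ h)
    obtain ⟨hor, hno⟩ := G.prox_pair ha hb hne'
    refine ⟨hor, ?_⟩
    intro ρ hρ hand
    exact hno (Fin.castLE (Nat.sub_le G.N 1) ρ) hρ hand

/-- The last vertex. -/
def tvert (G : DualGraph) : Fin G.N := ⟨G.N - 1, Nat.sub_lt G.Npos Nat.one_pos⟩

/-- The embedding of truncated vertices. -/
abbrev emb (G : DualGraph) (x : Fin (G.N - 1)) : Fin G.N := Fin.castLE (Nat.sub_le G.N 1) x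

section Transfer

variable (G : DualGraph) (h2 : 2 ≤ G.N)

lemma emb_ne_tvert (x : Fin (G.N - 1)) : G.emb x ≠ G.tvert := by
  intro h
  have h1 := congrArg Fin.val h
  have hx := x.2
  simp only [emb, Fin.coe_castLE, tvert] at h1
  omega

lemma exists_emb {z : Fin G.N} (hz : z ≠ G.tvert) : ∃ x : Fin (G.N - 1), G.emb x = z := by
  have hz1 : z.1 < G.N - 1 := by
    have h1 := z.2
    rcases Nat.lt_or_ge z.1 (G.N - 1) with h | h
    · exact h
    · exact absurd (Fin.ext (show z.1 = (G.tvert).1 by simp only [tvert]; omega)) hz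
  exact ⟨⟨z.1, hz1⟩, Fin.ext rfl⟩

lemma not_prox_tvert (ρ : Fin G.N) : ¬ G.prox ρ G.tvert := by
  intro h
  have h1 : (G.tvert).1 < ρ.1 := G.prox_lt h
  have h2 := ρ.2
  simp only [tvert] at h1
  omega

lemma adj_tvert_iff {z : Fin G.N} : G.adj G.tvert z ↔ G.prox G.tvert z := by
  rw [adj_iff]
  constructor
  · rintro ⟨h | h, _⟩
    · exact h
    · exact absurd h (not_prox_tvert G z)
  · intro h
    exact ⟨Or.inl h, fun ρ hρ => not_prox_tvert G ρ hρ.1⟩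

lemma adj_trunc_of_adj {x y : Fin (G.N - 1)} (h : G.adj (G.emb x) (G.emb y)) :
    (G.trunc h2).adj x y := by
  rw [adj_iff] at h
  apply adj_iff.mpr
  exact ⟨h.1, fun ρ hρ => h.2 (G.emb ρ) hρ⟩

lemma adj_of_adj_trunc {x y : Fin (G.N - 1)} (h : (G.trunc h2).adj x y) :
    G.adj (G.emb x) (G.emb y) ∨ (G.prox G.tvert (G.emb x) ∧ G.prox G.tvert (G.emb y)) := by
  replace h := adj_iff.mp h
  by_cases ht : G.prox G.tvert (G.emb x) ∧ G.prox G.tvert (G.emb y)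
  · exact Or.inr ht
  · left
    rw [adj_iff]
    refine ⟨h.1, ?_⟩
    intro ρ hρ
    by_cases hρt : ρ = G.tvert
    · exact ht (hρt ▸ hρ)
    · obtain ⟨ρ', rfl⟩ := exists_emb G hρt
      exact h.2 ρ' hρ

lemma emb_lt_tvert (x : Fin (G.N - 1)) : G.emb x < G.tvert := by
  have := x.2
  simp only [Fin.lt_def, emb, Fin.coe_castLE, tvert]
  omega

lemma adj_trunc_of_prox_tvert {x y : Fin (G.N - 1)} (hx : G.prox G.tvert (G.emb x))
    (hy : G.prox G.tvert (G.emb y)) (hne : x ≠ y) : (G.trunc h2).adj x y := by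
  have hne' : G.emb x ≠ G.emb y := fun h => hne (Fin.castLE_injective _ h)
  obtain ⟨hor, hno⟩ := G.prox_pair hx hy hne'
  apply adj_iff.mpr
  refine ⟨hor, ?_⟩
  intro ρ hρ
  exact hno (G.emb ρ) (emb_lt_tvert G ρ) hρ

lemma free_emb_iff {x : Fin (G.N - 1)} : G.Free (G.emb x) ↔ (G.trunc h2).Free x := by
  have himg : {ν : Fin G.N | G.prox (G.emb x) ν}
      = (G.emb) '' {ν : Fin (G.N-1) | (G.trunc h2).prox x ν} := by
    ext ν
    simp only [Set.mem_setOf_eq, Set.mem_image]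
    constructor
    · intro h
      have hν : ν ≠ G.tvert := fun he => not_prox_tvert G _ (he ▸ h)
      obtain ⟨ν', rfl⟩ := exists_emb G hν
      exact ⟨ν', h, rfl⟩
    · rintro ⟨ν', h, rfl⟩; exact h
  unfold Free
  rw [himg, Set.ncard_image_of_injective _ (Fin.castLE_injective _)]
  exact Iff.rfl

lemma infNear_trunc {μ : Fin (G.N - 1)} {z : Fin G.N}
    (h : Relation.ReflTransGen G.prox (G.emb μ) z) :
    ∃ γ : Fin (G.N - 1), G.emb γ = z ∧ (G.trunc h2).InfNear μ γ := by
  induction h with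
  | refl => exact ⟨μ, rfl, Relation.ReflTransGen.refl⟩
  | @tail b c _ hbc ih =>
    obtain ⟨γb, rfl, hγb⟩ := ih
    have hlt : c.1 < (G.emb γb).1 := G.prox_lt hbc
    have hc : c ≠ G.tvert := by
      intro he
      have h1 := γb.2
      have h2 := congrArg Fin.val he
      simp only [tvert] at h2
      simp only [emb, Fin.coe_castLE] at hlt
      omega
    obtain ⟨γc, rfl⟩ := exists_emb G hc
    exact ⟨γc, rfl, hγb.tail hbc⟩

lemma infNear_of_trunc {μ γ : Fin (G.N - 1)} (h : (G.trunc h2).InfNear μ γ) :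
    G.InfNear (G.emb μ) (G.emb γ) :=
  Relation.ReflTransGen.lift (G.emb) (fun _ _ hab => hab) _ _ h

lemma proj_chain (C : Fin G.N → Fin G.N → Prop) (C' : Fin (G.N-1) → Fin (G.N-1) → Prop)
    (hold : ∀ z w : Fin (G.N-1), G.adj (G.emb z) (G.emb w) → C (G.emb z) (G.emb w) → C' z w)
    (hthrough : ∀ z w : Fin (G.N-1), G.prox G.tvert (G.emb z) → G.prox G.tvert (G.emb w) →
      z ≠ w → C (G.emb z) G.tvert → C G.tvert (G.emb w) → C' z w)
    {x y : Fin (G.N-1)}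
    (h : Relation.ReflTransGen (fun a b => G.adj a b ∧ C a b) (G.emb x) (G.emb y)) :
    Relation.ReflTransGen (fun a b => (G.trunc h2).adj a b ∧ C' a b) x y := by
  have key : ∀ z, Relation.ReflTransGen (fun a b => G.adj a b ∧ C a b) (G.emb x) z →
      (∀ _ : z ≠ G.tvert, ∃ a, G.emb a = z ∧
        Relation.ReflTransGen (fun a b => (G.trunc h2).adj a b ∧ C' a b) x a) ∧
      (z = G.tvert → ∃ a, G.prox G.tvert (G.emb a) ∧ C (G.emb a) G.tvert ∧
        Relation.ReflTransGen (fun a b => (G.trunc h2).adj a b ∧ C' a b) x a) := by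
    intro z h
    induction h with
    | refl =>
      exact ⟨fun _ => ⟨x, rfl, Relation.ReflTransGen.refl⟩,
        fun he => absurd he (emb_ne_tvert G x)⟩
    | @tail b c _ hbc ih =>
      obtain ⟨hadj, hC⟩ := hbc
      by_cases hct : c = G.tvert
      · subst hct
        have hbt : b ≠ G.tvert := hadj.1
        obtain ⟨ab, rfl, hch⟩ := ih.1 hbt
        refine ⟨fun hne => absurd rfl hne, fun _ => ⟨ab, ?_, hC, hch⟩⟩
        exact (adj_tvert_iff G).mp (G.adj_symm hadj)
      · refine ⟨fun _ => ?_, fun he => absurd he hct⟩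
        obtain ⟨ac, rfl⟩ := exists_emb G hct
        by_cases hbt : b = G.tvert
        · subst hbt
          obtain ⟨ab, hab1, hab2, hch⟩ := ih.2 rfl
          have hproxc : G.prox G.tvert (G.emb ac) := (adj_tvert_iff G).mp hadj
          by_cases he : ab = ac
          · exact ⟨ac, rfl, he ▸ hch⟩
          · exact ⟨ac, rfl, hch.tail ⟨adj_trunc_of_prox_tvert G h2 hab1 hproxc he,
              hthrough ab ac hab1 hproxc he hab2 hC⟩⟩
        · obtain ⟨ab, rfl, hch⟩ := ih.1 hbt
          exact ⟨ac, rfl, hch.tail ⟨adj_trunc_of_adj G h2 hadj, hold ab ac hadj hC⟩⟩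
  obtain ⟨a, ha, hch⟩ := (key (G.emb y) h).1 (emb_ne_tvert G y)
  have ha' : a = y := Fin.castLE_injective _ ha
  exact ha' ▸ hch

lemma lift_chain (C : Fin G.N → Fin G.N → Prop) (C' : Fin (G.N-1) → Fin (G.N-1) → Prop)
    (hkeep : ∀ z w, (G.trunc h2).adj z w → C' z w → C (G.emb z) (G.emb w))
    (hdetour : ∀ z w, (G.trunc h2).adj z w → C' z w → C (G.emb z) G.tvert ∧ C G.tvert (G.emb w))
    {x y : Fin (G.N-1)}
    (h : Relation.ReflTransGen (fun a b => (G.trunc h2).adj a b ∧ C' a b) x y) :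
    Relation.ReflTransGen (fun a b => G.adj a b ∧ C a b) (G.emb x) (G.emb y) := by
  induction h with
  | refl => exact Relation.ReflTransGen.refl
  | @tail b c _ hbc ih =>
    rcases adj_of_adj_trunc G h2 hbc.1 with hadj | ⟨hpb, hpc⟩
    · exact ih.tail ⟨hadj, hkeep _ _ hbc.1 hbc.2⟩
    · have hadj1 : G.adj (G.emb b) G.tvert := G.adj_symm ((adj_tvert_iff G).mpr hpb)
      have hadj2 : G.adj G.tvert (G.emb c) := (adj_tvert_iff G).mpr hpc
      exact (ih.tail ⟨hadj1, (hdetour _ _ hbc.1 hbc.2).1⟩).tail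
        ⟨hadj2, (hdetour _ _ hbc.1 hbc.2).2⟩

lemma lift_plain {x y : Fin (G.N-1)} (h : Relation.ReflTransGen (G.trunc h2).adj x y) :
    Relation.ReflTransGen G.adj (G.emb x) (G.emb y) := by
  have h1 := lift_chain G h2 (fun _ _ => True) (fun _ _ => True)
    (fun _ _ _ _ => trivial) (fun _ _ _ _ => ⟨trivial, trivial⟩) (x := x) (y := y)
    (Relation.ReflTransGen.mono (fun a b hab => ⟨hab, trivial⟩) _ _ h)
  exact Relation.ReflTransGen.mono (fun a b hab => hab.1) _ _ h1

end Transfer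

end DualGraph


namespace DualGraph

/-- The master invariant, proved by induction on the number of vertices. -/
def GoodG (G : DualGraph) : Prop :=
  (∀ x y : Fin G.N, Relation.ReflTransGen G.adj x y) ∧
  (∀ x y : Fin G.N, G.adj x y → ¬ G.EReach x y x y) ∧
  (∀ s a b : Fin G.N, G.prox s a → G.prox s b → a ≠ b → ¬ G.AReach s a b) ∧
  (∀ μ ν x : Fin G.N, G.Free ν → G.prox ν μ → x < ν → x ≠ μ → ¬ G.AReach μ ν x) ∧
  (∀ μ γ : Fin G.N, G.InfNear μ γ → γ ≠ μ → ∃ η, G.prox μ η ∧ G.AReach μ γ η)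

lemma goodG : ∀ n : ℕ, ∀ G : DualGraph, G.N = n → GoodG G := by
  intro n
  induction n using Nat.strong_induction_on with
  | _ n IH =>
  intro G hn
  by_cases hN1 : G.N = 1
  · have hsub : ∀ x y : Fin G.N, x = y := by
      intro x y
      apply Fin.ext
      have hx := x.2
      have hy := y.2
      omega
    refine ⟨?_, ?_, ?_, ?_, ?_⟩
    · intro x y; rw [hsub x y]
    · intro x y hadj _; exact hadj.1 (hsub x y)
    · intro s a b _ _ hne _; exact hne (hsub a b)
    · intro μ ν x _ _ hlt _ _; rw [hsub x ν] at hlt; exact lt_irrefl _ hlt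
    · intro μ γ _ hne; exact absurd (hsub γ μ) hne
  · have h2 : 2 ≤ G.N := by have := G.Npos; omega
    obtain ⟨ih1, ih2, ih3, ih4, ih5⟩ : GoodG (G.trunc h2) := IH (G.N - 1) (by omega) _ rfl
    have hproxt : ∃ a : Fin (G.N - 1), G.prox G.tvert (G.emb a) := by
      obtain ⟨ν, hν⟩ := G.prox_nonempty G.tvert (by simp only [tvert]; omega)
      have hν' : ν ≠ G.tvert := fun he => not_prox_tvert G ν (he ▸ hν)
      obtain ⟨a, rfl⟩ := exists_emb G hν'
      exact ⟨a, hν⟩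
    -- Connectivity
    have conn : ∀ x y : Fin G.N, Relation.ReflTransGen G.adj x y := by
      have hto : ∀ z : Fin G.N, Relation.ReflTransGen G.adj G.tvert z := by
        intro z
        by_cases hz : z = G.tvert
        · rw [hz]
        · obtain ⟨z', rfl⟩ := exists_emb G hz
          obtain ⟨a, ha⟩ := hproxt
          exact Relation.ReflTransGen.head ((adj_tvert_iff G).mpr ha)
            (lift_plain G h2 (ih1 a z'))
      have hsymm : Symmetric (Relation.ReflTransGen G.adj) :=
        fun _ _ h => (@Relation.ReflTransGen.stdSymm _ _ ⟨fun _ _ huv => G.adj_symm huv⟩).symm _ _ h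
      intro x y
      exact (hsymm (hto x)).trans (hto y)
    -- Separation by a satellite
    have i3 : ∀ s a b : Fin G.N, G.prox s a → G.prox s b → a ≠ b → ¬ G.AReach s a b := by
      intro s a b ha hb hne hch
      by_cases hst : s = G.tvert
      · subst hst
        have hat : a ≠ G.tvert := ne_of_lt (G.prox_lt ha)
        have hbt : b ≠ G.tvert := ne_of_lt (G.prox_lt hb)
        obtain ⟨a', rfl⟩ := exists_emb G hat
        obtain ⟨b', rfl⟩ := exists_emb G hbt
        have hne' : a' ≠ b' := fun h => hne (congrArg G.emb h)
        have hch' := proj_chain G h2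
          (C := fun u v => u ≠ G.tvert ∧ v ≠ G.tvert)
          (C' := fun u v => ¬(u = a' ∧ v = b') ∧ ¬(u = b' ∧ v = a'))
          (by
            intro z w hadjzw _
            constructor
            · rintro ⟨rfl, rfl⟩
              exact (adj_iff.mp hadjzw).2 G.tvert ⟨ha, hb⟩
            · rintro ⟨rfl, rfl⟩
              exact (adj_iff.mp hadjzw).2 G.tvert ⟨hb, ha⟩)
          (by
            intro z w _ _ _ hCz _
            exact absurd rfl hCz.2)
          (Relation.ReflTransGen.mono (fun u v h => ⟨h.1, h.2⟩) _ _ hch)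
        exact ih2 a' b' (adj_trunc_of_prox_tvert G h2 ha hb hne')
          (Relation.ReflTransGen.mono (fun u v h => ⟨h.1, h.2⟩) _ _ hch')
      · obtain ⟨s', rfl⟩ := exists_emb G hst
        have hat : a ≠ G.tvert := ne_of_lt ((G.prox_lt ha).trans (emb_lt_tvert G s'))
        have hbt : b ≠ G.tvert := ne_of_lt ((G.prox_lt hb).trans (emb_lt_tvert G s'))
        obtain ⟨a', rfl⟩ := exists_emb G hat
        obtain ⟨b', rfl⟩ := exists_emb G hbt
        have hch' := proj_chain G h2
          (C := fun u v => u ≠ G.emb s' ∧ v ≠ G.emb s')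
          (C' := fun u v => u ≠ s' ∧ v ≠ s')
          (by
            intro z w _ hC
            exact ⟨fun h => hC.1 (congrArg G.emb h), fun h => hC.2 (congrArg G.emb h)⟩)
          (by
            intro z w _ _ _ hCz hCw
            exact ⟨fun h => hCz.1 (congrArg G.emb h), fun h => hCw.2 (congrArg G.emb h)⟩)
          (Relation.ReflTransGen.mono (fun u v h => ⟨h.1, h.2⟩) _ _ hch)
        exact ih3 s' a' b' ha hb (fun h => hne (congrArg G.emb h))
          (Relation.ReflTransGen.mono (fun u v h => ⟨h.1, h.2⟩) _ _ hch')
    -- Every edge is a bridge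
    have br : ∀ x y : Fin G.N, G.adj x y → ¬ G.EReach x y x y := by
      have brt : ∀ u : Fin (G.N - 1), G.prox G.tvert (G.emb u) →
          ¬ G.EReach G.tvert (G.emb u) G.tvert (G.emb u) := by
        intro u hy hch
        by_cases hone : ∀ z, G.prox G.tvert z → z = G.emb u
        · rcases Relation.ReflTransGen.cases_head hch with he | ⟨c, hstep, _⟩
          · exact emb_ne_tvert G u he.symm
          · have hc : G.prox G.tvert c := (adj_tvert_iff G).mp hstep.1
            exact hstep.2.1 ⟨rfl, hone c hc⟩
        · push_neg at hone
          obtain ⟨o, ho, honeu⟩ := hone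
          have hot : o ≠ G.tvert := fun he => not_prox_tvert G o (he ▸ ho)
          obtain ⟨o', rfl⟩ := exists_emb G hot
          have hstept : ∀ z, G.EStep G.tvert (G.emb u) G.tvert z → z = G.emb o' := by
            intro z hz
            have hzp : G.prox G.tvert z := (adj_tvert_iff G).mp hz.1
            have hzu : z ≠ G.emb u := fun he => hz.2.1 ⟨rfl, he⟩
            by_contra hzo
            have hsub : ({z, G.emb o', G.emb u} : Set (Fin G.N)) ⊆ {ν | G.prox G.tvert ν} := by
              rintro p (rfl | rfl | rfl) <;> assumption
            have hle := Set.ncard_le_ncard hsub (Set.toFinite _)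
            have hcard : ({z, G.emb o', G.emb u} : Set (Fin G.N)).ncard = 3 := by
              rw [Set.ncard_insert_of_notMem (by simp [hzo, hzu]) (Set.toFinite _),
                Set.ncard_pair honeu]
            have := G.prox_card G.tvert
            omega
          have hstept' : ∀ z, G.EStep G.tvert (G.emb u) z G.tvert → z = G.emb o' :=
            fun z hz => hstept z (EStep.symm hz)
          have hext := extract_aux hstept hstept' (emb_ne_tvert G o') hch (emb_ne_tvert G u)
          exact i3 G.tvert (G.emb o') (G.emb u) ho hy honeu
            (Relation.ReflTransGen.mono (fun p q h => ⟨h.1.1, h.2⟩) _ _ hext)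
      intro x y hadj hch
      by_cases hxt : x = G.tvert
      · subst hxt
        have hy : G.prox G.tvert y := (adj_tvert_iff G).mp hadj
        have hyt : y ≠ G.tvert := fun he => not_prox_tvert G y (he ▸ hy)
        obtain ⟨u, rfl⟩ := exists_emb G hyt
        exact brt u hy hch
      · by_cases hyt : y = G.tvert
        · subst hyt
          have hx : G.prox G.tvert x := (adj_tvert_iff G).mp (G.adj_symm hadj)
          obtain ⟨u, rfl⟩ := exists_emb G hxt
          refine brt u hx ?_
          exact Relation.ReflTransGen.mono
            (fun p q h => ⟨h.1, fun hh => h.2.2 ⟨hh.1, hh.2⟩, fun hh => h.2.1 ⟨hh.1, hh.2⟩⟩)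
            _ _ hch.symm
        · obtain ⟨x', rfl⟩ := exists_emb G hxt
          obtain ⟨y', rfl⟩ := exists_emb G hyt
          have hnc : ¬(G.prox G.tvert (G.emb x') ∧ G.prox G.tvert (G.emb y')) :=
            (adj_iff.mp hadj).2 G.tvert
          have hch' := proj_chain G h2
            (C := fun a b => ¬(a = G.emb x' ∧ b = G.emb y') ∧ ¬(a = G.emb y' ∧ b = G.emb x'))
            (C' := fun a b => ¬(a = x' ∧ b = y') ∧ ¬(a = y' ∧ b = x'))
            (by
              intro z w _ hC
              constructor
              · rintro ⟨rfl, rfl⟩; exact hC.1 ⟨rfl, rfl⟩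
              · rintro ⟨rfl, rfl⟩; exact hC.2 ⟨rfl, rfl⟩)
            (by
              intro z w hz hw _ _ _
              constructor
              · rintro ⟨rfl, rfl⟩; exact hnc ⟨hz, hw⟩
              · rintro ⟨rfl, rfl⟩; exact hnc ⟨hw, hz⟩)
            (Relation.ReflTransGen.mono (fun u v h => ⟨h.1, h.2⟩) _ _ hch)
          exact ih2 x' y' (adj_trunc_of_adj G h2 hadj)
            (Relation.ReflTransGen.mono (fun u v h => ⟨h.1, h.2⟩) _ _ hch')
    -- Separation of a free vertex from its past
    have i4 : ∀ μ ν x : Fin G.N, G.Free ν → G.prox ν μ → x < ν → x ≠ μ → ¬ G.AReach μ ν x := by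
      intro μ ν x hfree hprox hlt hne hch
      by_cases hνt : ν = G.tvert
      · subst hνt
        rcases Relation.ReflTransGen.cases_head hch with he | ⟨c, hstep, _⟩
        · exact (ne_of_lt hlt) he.symm
        · have hc : G.prox G.tvert c := (adj_tvert_iff G).mp hstep.1
          exact hstep.2.2 (free_unique hfree hc hprox)
      · obtain ⟨ν', rfl⟩ := exists_emb G hνt
        have hμt : μ ≠ G.tvert := ne_of_lt ((G.prox_lt hprox).trans (emb_lt_tvert G ν'))
        have hxt : x ≠ G.tvert := ne_of_lt (hlt.trans (emb_lt_tvert G ν'))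
        obtain ⟨μ', rfl⟩ := exists_emb G hμt
        obtain ⟨x', rfl⟩ := exists_emb G hxt
        have hch' := proj_chain G h2
          (C := fun u v => u ≠ G.emb μ' ∧ v ≠ G.emb μ')
          (C' := fun u v => u ≠ μ' ∧ v ≠ μ')
          (by
            intro z w _ hC
            exact ⟨fun h => hC.1 (congrArg G.emb h), fun h => hC.2 (congrArg G.emb h)⟩)
          (by
            intro z w _ _ _ hCz hCw
            exact ⟨fun h => hCz.1 (congrArg G.emb h), fun h => hCw.2 (congrArg G.emb h)⟩)
          (Relation.ReflTransGen.mono (fun u v h => ⟨h.1, h.2⟩) _ _ hch)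
        refine ih4 μ' ν' x' ((free_emb_iff G h2).mp hfree) hprox ?_
          (fun h => hne (congrArg G.emb h))
          (Relation.ReflTransGen.mono (fun u v h => ⟨h.1, h.2⟩) _ _ hch')
        exact hlt
    -- Anterior chains reach a proximate vertex
    have i5 : ∀ μ γ : Fin G.N, G.InfNear μ γ → γ ≠ μ → ∃ η, G.prox μ η ∧ G.AReach μ γ η := by
      intro μ γ hinf hne
      by_cases hμt : μ = G.tvert
      · subst hμt
        have hγt : γ ≠ G.tvert := hne
        obtain ⟨γ', rfl⟩ := exists_emb G hγt
        by_cases hγp : G.prox G.tvert (G.emb γ')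
        · exact ⟨G.emb γ', hγp, Relation.ReflTransGen.refl⟩
        · obtain ⟨a, ha⟩ := hproxt
          rcases firsthit_aux (S := {x : Fin (G.N - 1) | G.prox G.tvert (G.emb x)})
            (ih1 γ' a) ha with hγS | ⟨w, z, hzS, hwS, hchw, hwz⟩
          · exact absurd hγS hγp
          · have hlift : G.AReach G.tvert (G.emb γ') (G.emb w) := by
              refine Relation.ReflTransGen.lift G.emb ?_ _ _ hchw
              intro p q hpq
              rcases adj_of_adj_trunc G h2 hpq.1 with hadj | ⟨hp, _⟩
              · exact ⟨hadj, emb_ne_tvert G p, emb_ne_tvert G q⟩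
              · exact absurd hp hpq.2.1
            have hstep : G.AStep G.tvert (G.emb w) (G.emb z) := by
              rcases adj_of_adj_trunc G h2 hwz with hadj | ⟨hp, _⟩
              · exact ⟨hadj, emb_ne_tvert G w, emb_ne_tvert G z⟩
              · exact absurd hp hwS
            exact ⟨G.emb z, hzS, hlift.tail hstep⟩
      · obtain ⟨μ', rfl⟩ := exists_emb G hμt
        obtain ⟨γ', rfl, hinf'⟩ := infNear_trunc G h2 hinf
        obtain ⟨η, hη1, hη2⟩ := ih5 μ' γ' hinf' (fun h => hne (congrArg G.emb h))
        refine ⟨G.emb η, hη1, ?_⟩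
        have hl := lift_chain G h2
          (C := fun u v => u ≠ G.emb μ' ∧ v ≠ G.emb μ')
          (C' := fun u v => u ≠ μ' ∧ v ≠ μ')
          (by
            intro z w _ hC
            exact ⟨fun h => hC.1 (Fin.castLE_injective _ h), fun h => hC.2 (Fin.castLE_injective _ h)⟩)
          (by
            intro z w _ hC
            exact ⟨⟨fun h => hC.1 (Fin.castLE_injective _ h), (emb_ne_tvert G μ').symm⟩,
              ⟨(emb_ne_tvert G μ').symm, fun h => hC.2 (Fin.castLE_injective _ h)⟩⟩)
          (Relation.ReflTransGen.mono (fun u v h => ⟨h.1, h.2⟩) _ _ hη2)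
        exact Relation.ReflTransGen.mono (fun u v h => ⟨h.1, h.2⟩) _ _ hl
    exact ⟨conn, br, i3, i4, i5⟩

end DualGraph


namespace DualGraph

variable {G : DualGraph}

lemma connected (hg : GoodG G) : G.graph.Connected := by
  have hpre : G.graph.Preconnected := by
    intro u v
    rw [SimpleGraph.reachable_iff_reflTransGen]
    exact hg.1 u v
  haveI : Nonempty (Fin G.N) := ⟨G.root⟩
  exact ⟨hpre⟩

lemma acyclic (hg : GoodG G) : G.graph.IsAcyclic := by
  intro v c hc
  cases c with
  | nil => exact hc.ne_nil rfl
  | @cons _ w _ h p =>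
    have hnodup : (SimpleGraph.Walk.cons h p).edges.Nodup := hc.isCircuit.isTrail.edges_nodup
    rw [SimpleGraph.Walk.edges_cons, List.nodup_cons] at hnodup
    have hch : G.EReach v w w v := eReach_of_walk p hnodup.1
    exact hg.2.1 v w h hch.symm

lemma path_eq (hg : GoodG G) {x y : Fin G.N} {p q : G.graph.Walk x y}
    (hp : p.IsPath) (hq : q.IsPath) : p = q := by
  have h := SimpleGraph.isAcyclic_iff_path_unique.mp (acyclic hg) (v := x) (w := y) ⟨p, hp⟩ ⟨q, hq⟩
  exact Subtype.ext_iff.mp h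

lemma mem_pathSet_iff (hg : GoodG G) {x y μ : Fin G.N} (hx : x ≠ μ) (hy : y ≠ μ) :
    μ ∈ G.pathSet x y ↔ ¬ G.AReach μ x y := by
  have hconn := connected hg
  have hmem : μ ∈ G.pathSet x y ↔ G.dist x μ + G.dist μ y = G.dist x y := by
    simp [pathSet]
  rw [hmem]
  show G.graph.dist x μ + G.graph.dist μ y = G.graph.dist x y ↔ _
  constructor
  · intro hd hA
    obtain ⟨W, hW⟩ := walk_of_aReach hA hy
    obtain ⟨A, hA'⟩ := (hconn.preconnected x μ).exists_walk_length_eq_dist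
    obtain ⟨B, hB'⟩ := (hconn.preconnected μ y).exists_walk_length_eq_dist
    have hlen : (A.append B).length = G.graph.dist x y := by
      rw [SimpleGraph.Walk.length_append, hA', hB']
      exact hd
    have hpath := (A.append B).isPath_of_length_eq_dist hlen
    have heq := path_eq hg hpath W.bypass_isPath
    have hmemμ : μ ∈ (A.append B).support := by
      rw [SimpleGraph.Walk.mem_support_append_iff]
      exact Or.inl A.end_mem_support
    rw [heq] at hmemμ
    exact hW (W.support_bypass_subset hmemμ)
  · intro hA
    obtain ⟨W0, hW0⟩ := (hconn.preconnected x y).exists_walk_length_eq_dist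
    have hμW : μ ∈ W0.support := by
      by_contra hcon
      exact hA (aReach_of_walk W0 hcon)
    have h1 : G.graph.dist x μ ≤ (W0.takeUntil μ hμW).length := SimpleGraph.dist_le _
    have h2 : G.graph.dist μ y ≤ (W0.dropUntil μ hμW).length := SimpleGraph.dist_le _
    have h3 : (W0.takeUntil μ hμW).length + (W0.dropUntil μ hμW).length = W0.length := by
      rw [← SimpleGraph.Walk.length_append, SimpleGraph.Walk.take_spec]
    have h4 := hconn.dist_triangle (u := x) (v := μ) (w := y)
    omega

lemma mem_branch_iff (hg : GoodG G) {μ ν η : Fin G.N} :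
    η ∈ G.branch μ ν ↔ ν ≠ μ ∧ η ≠ μ ∧ G.AReach μ ν η := by
  unfold branch
  rw [Finset.mem_filter]
  simp only [Finset.mem_univ, true_and]
  constructor
  · rintro ⟨h1, h2, h3⟩
    refine ⟨h1, h2, ?_⟩
    by_contra hA
    exact h3 ((mem_pathSet_iff hg h1 h2).mpr hA)
  · rintro ⟨h1, h2, h3⟩
    exact ⟨h1, h2, fun hm => ((mem_pathSet_iff hg h1 h2).mp hm) h3⟩

end DualGraph

end AuxDG





/-- The nonempty posterior branches of `μ` correspond one to one to the free
vertices proximate to `μ`, whereas the anterior branches are in one to one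
correspondence with the vertices to which `μ` is proximate. -/
theorem stmt0 (G : DualGraph) (μ : Fin G.N) :
    (∀ ν, (G.branch μ ν).Nonempty → ¬ G.Anterior μ ν →
      ∃! η, η ∈ G.branch μ ν ∧ G.Free η ∧ G.prox η μ) ∧
    (∀ η, G.Free η → G.prox η μ → ¬ G.Anterior μ η) ∧
    (∀ ν, G.Anterior μ ν → ∃! η, η ∈ G.branch μ ν ∧ G.prox μ η) ∧
    (∀ η, G.prox μ η → G.Anterior μ η) := by
  have hg : DualGraph.GoodG G := DualGraph.goodG G.N G rfl
  refine ⟨?_, ?_, ?_, ?_⟩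
  · -- posterior branches
    intro ν hne hpost
    obtain ⟨x, hx⟩ := hne
    rw [DualGraph.mem_branch_iff hg] at hx
    obtain ⟨hνμ, hxμ, hchx⟩ := hx
    obtain ⟨w, hwadj, hwch⟩ := DualGraph.exists_nbr hxμ (hg.1 x μ)
    have hwμ : w ≠ μ := hwadj.1
    have hwprox : G.prox w μ := by
      rcases (DualGraph.adj_iff.mp hwadj).1 with h | h
      · exact h
      · refine absurd ⟨w, ?_, Relation.ReflTransGen.single h⟩ hpost
        exact (DualGraph.mem_branch_iff hg).mpr ⟨hνμ, hwμ, hchx.trans hwch⟩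
    have desc : ∀ k : ℕ, ∀ η : Fin G.N, η.1 ≤ k → G.prox η μ → G.AReach μ ν η →
        ∃ η', η' ∈ G.branch μ ν ∧ G.Free η' ∧ G.prox η' μ := by
      intro k
      induction k with
      | zero =>
        intro η hk hprox _
        have h1 : μ < η := G.prox_lt hprox
        have h2 : μ.1 < η.1 := h1
        omega
      | succ k ih =>
        intro η hk hprox hch
        by_cases hf : G.Free η
        · exact ⟨η, (DualGraph.mem_branch_iff hg).mpr
            ⟨hνμ, ne_of_gt (G.prox_lt hprox), hch⟩, hf, hprox⟩
        · obtain ⟨b, hb, hbμ⟩ := DualGraph.exists_other_of_not_free hf hprox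
          have hW := DualGraph.w1 (G := G) G.N η b μ (by omega) hb (G.prox_lt hprox)
            (Ne.symm hbμ)
          have hchb : G.AReach μ ν b := hch.trans hW
          rcases (G.prox_pair hprox hb (fun h => hbμ h.symm)).1 with h | h
          · refine absurd ⟨b, ?_, Relation.ReflTransGen.single h⟩ hpost
            exact (DualGraph.mem_branch_iff hg).mpr ⟨hνμ, hbμ, hchb⟩
          · have hblt : b.1 < η.1 := G.prox_lt hb
            exact ih b (by omega) h hchb
    obtain ⟨η', hmem, hfree, hprox⟩ := desc G.N w (Nat.le_of_lt w.2) hwprox (hchx.trans hwch)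
    refine ⟨η', ⟨hmem, hfree, hprox⟩, ?_⟩
    rintro η2 ⟨hmem2, hfree2, hprox2⟩
    by_contra hne2
    rw [DualGraph.mem_branch_iff hg] at hmem hmem2
    have hch12 : G.AReach μ η2 η' := (hmem2.2.2.symm).trans hmem.2.2
    rcases lt_trichotomy η2 η' with hlt | heq | hlt
    · exact hg.2.2.2.1 μ η' η2 hfree hprox hlt hmem2.2.1 hch12.symm
    · exact hne2 heq
    · exact hg.2.2.2.1 μ η2 η' hfree2 hprox2 hlt hmem.2.1 hch12
  · -- free proximate vertices give posterior branches
    intro η hfree hprox hant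
    obtain ⟨γ, hγmem, hinf⟩ := hant
    rw [DualGraph.mem_branch_iff hg] at hγmem
    obtain ⟨hημ, hγμ, hch⟩ := hγmem
    have hγle : γ ≤ μ := DualGraph.infNear_le hinf
    have hγlt : γ < η := lt_of_le_of_lt hγle (G.prox_lt hprox)
    exact hg.2.2.2.1 μ η γ hfree hprox hγlt hγμ hch
  · -- anterior branches
    intro ν hant
    obtain ⟨γ, hγmem, hinf⟩ := hant
    rw [DualGraph.mem_branch_iff hg] at hγmem
    obtain ⟨hνμ, hγμ, hch⟩ := hγmem
    obtain ⟨η, hηprox, hηch⟩ := hg.2.2.2.2 μ γ hinf hγμ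
    have hημ : η ≠ μ := ne_of_lt (G.prox_lt hηprox)
    refine ⟨η, ⟨(DualGraph.mem_branch_iff hg).mpr ⟨hνμ, hημ, hch.trans hηch⟩, hηprox⟩, ?_⟩
    rintro η2 ⟨hmem2, hprox2⟩
    by_contra hne2
    rw [DualGraph.mem_branch_iff hg] at hmem2
    have hch12 : G.AReach μ η2 η := (hmem2.2.2.symm).trans (hch.trans hηch)
    exact hg.2.2.1 μ η2 η hprox2 hηprox hne2 hch12
  · -- vertices to which μ is proximate give anterior branches
    intro η hprox
    refine ⟨η, (DualGraph.mem_branch_iff hg).mpr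
      ⟨ne_of_lt (G.prox_lt hprox), ne_of_lt (G.prox_lt hprox), Relation.ReflTransGen.refl⟩,
      Relation.ReflTransGen.single hprox⟩
end

section
/- Let F be an antinef divisor with valuation vector f ∈ ℤ^N and set ξ_F := min_ν λ(f_ν,ν). Then the support {ν ∈ Γ : λ(f_ν,ν) = ξ_F} of the jumping number ξ_F with respect to F contains a vertex ν which is either a star (v_Γ(ν) ≥ 3) or satisfies d̂_ν > 0 (i.e. corresponds to a simple factor of the ideal). -/
open Matrix BigOperators

open scoped Classical

namespace DualGraph

variable (G : DualGraph)

lemma prox_asymm_s3 {μ ν : Fin G.N} (h : G.prox μ ν) : ¬ G.prox ν μ :=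
  fun h' => absurd (G.prox_lt h) (not_lt.mpr (le_of_lt (G.prox_lt h')))

lemma prox_irrefl (μ : Fin G.N) : ¬ G.prox μ μ := fun h => lt_irrefl _ (G.prox_lt h)

lemma P_triangular : G.P.BlockTriangular OrderDual.toDual := by
  intro μ ν h
  have hlt : μ < ν := h
  unfold P
  rw [if_neg (ne_of_lt hlt), if_neg (fun hp => absurd (G.prox_lt hp) (not_lt.mpr hlt.le))]

lemma det_P : G.P.det = 1 := by
  rw [Matrix.det_of_lowerTriangular _ (G.P_triangular)]
  simp [P]

lemma isUnit_det_P : IsUnit G.P.det := by rw [G.det_P]; exact isUnit_one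

lemma P_mul_Q : G.P * G.Q = 1 := Matrix.mul_nonsing_inv _ G.isUnit_det_P

lemma Q_mul_P : G.Q * G.P = 1 := Matrix.nonsing_inv_mul _ G.isUnit_det_P

lemma isUnit_det_M : IsUnit (G.Pᵀ * G.P).det := by
  rw [Matrix.det_mul, Matrix.det_transpose, G.det_P]
  simp

lemma V_mul_M : G.V * (G.Pᵀ * G.P) = 1 := Matrix.nonsing_inv_mul _ G.isUnit_det_M

lemma V_eq_Q_mul_Qt : G.V = G.Q * G.Qᵀ := by
  unfold V Q
  rw [Matrix.mul_inv_rev, Matrix.transpose_nonsing_inv]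

lemma Q_rec (μ ρ : Fin G.N) :
    G.Q μ ρ = (if μ = ρ then (1:ℚ) else 0)
      + ∑ ν ∈ Finset.univ.filter (fun ν => G.prox μ ν), G.Q ν ρ := by
  classical
  have h := congrFun (congrFun G.P_mul_Q μ) ρ
  rw [Matrix.mul_apply, Matrix.one_apply] at h
  have hterm : ∀ ν, G.P μ ν * G.Q ν ρ
      = (if ν = μ then G.Q ν ρ else 0) - (if G.prox μ ν then G.Q ν ρ else 0) := by
    intro ν
    unfold P
    rcases eq_or_ne μ ν with rfl | hne
    · rw [if_pos rfl, if_pos rfl, if_neg (G.prox_irrefl μ), one_mul, sub_zero]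
    · rw [if_neg hne, if_neg (Ne.symm hne)]
      by_cases hp : G.prox μ ν
      · rw [if_pos hp, if_pos hp, zero_sub, neg_one_mul]
      · rw [if_neg hp, if_neg hp, zero_mul, sub_zero]
  rw [Finset.sum_congr rfl (fun ν _ => hterm ν), Finset.sum_sub_distrib,
    Finset.sum_ite_eq' Finset.univ μ (fun ν => G.Q ν ρ), if_pos (Finset.mem_univ μ),
    ← Finset.sum_filter] at h
  linarith [h]

lemma Q_nonneg (ρ : Fin G.N) : ∀ (μ : Fin G.N), 0 ≤ G.Q μ ρ := by
  classical
  have H : ∀ n : ℕ, ∀ μ : Fin G.N, (μ : ℕ) < n → 0 ≤ G.Q μ ρ := by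
    intro n
    induction n with
    | zero => intro μ h; omega
    | succ n ih =>
      intro μ hμ
      rw [G.Q_rec μ ρ]
      have h1 : (0:ℚ) ≤ if μ = ρ then (1:ℚ) else 0 := by positivity
      have h2 : (0:ℚ) ≤ ∑ ν ∈ Finset.univ.filter (fun ν => G.prox μ ν), G.Q ν ρ := by
        apply Finset.sum_nonneg
        intro ν hν
        have hp : G.prox μ ν := (Finset.mem_filter.mp hν).2
        exact ih ν (by have := G.prox_lt hp; omega)
      linarith
  exact fun μ => H ((μ : ℕ) + 1) μ (lt_add_one _)

lemma Q_root_pos : ∀ (μ : Fin G.N), 0 < G.Q μ ⟨0, G.Npos⟩ := by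
  classical
  have H : ∀ n : ℕ, ∀ μ : Fin G.N, (μ : ℕ) < n → 0 < G.Q μ ⟨0, G.Npos⟩ := by
    intro n
    induction n with
    | zero => intro μ h; omega
    | succ n ih =>
      intro μ hμ
      rw [G.Q_rec μ ⟨0, G.Npos⟩]
      rcases Nat.eq_zero_or_pos (μ : ℕ) with h0 | h0
      · have : μ = ⟨0, G.Npos⟩ := by ext; exact h0
        rw [if_pos this]
        have : (0:ℚ) ≤ ∑ ν ∈ Finset.univ.filter (fun ν => G.prox μ ν), G.Q ν ⟨0, G.Npos⟩ :=
          Finset.sum_nonneg (fun ν _ => G.Q_nonneg _ ν)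
        linarith
      · obtain ⟨ν₁, hν₁⟩ := G.prox_nonempty μ h0
        have hmem : ν₁ ∈ Finset.univ.filter (fun ν => G.prox μ ν) := by
          simp [hν₁]
        have hlt : (ν₁ : ℕ) < n := by have := G.prox_lt hν₁; omega
        have hpos : 0 < G.Q ν₁ ⟨0, G.Npos⟩ := ih ν₁ hlt
        have hle : G.Q ν₁ ⟨0, G.Npos⟩
            ≤ ∑ ν ∈ Finset.univ.filter (fun ν => G.prox μ ν), G.Q ν ⟨0, G.Npos⟩ :=
          Finset.single_le_sum (fun ν _ => G.Q_nonneg _ ν) hmem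
        have h1 : (0:ℚ) ≤ if μ = ⟨0, G.Npos⟩ then (1:ℚ) else 0 := by positivity
        linarith
  exact fun μ => H ((μ : ℕ) + 1) μ (lt_add_one _)

lemma V_pos (μ ν : Fin G.N) : 0 < G.V μ ν := by
  classical
  rw [G.V_eq_Q_mul_Qt, Matrix.mul_apply]
  have hle : G.Q μ ⟨0, G.Npos⟩ * G.Qᵀ ⟨0, G.Npos⟩ ν
      ≤ ∑ ρ, G.Q μ ρ * G.Qᵀ ρ ν :=
    Finset.single_le_sum (fun ρ _ => mul_nonneg (G.Q_nonneg ρ μ) (G.Q_nonneg ρ ν))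
      (Finset.mem_univ _)
  have hpos : 0 < G.Q μ ⟨0, G.Npos⟩ * G.Qᵀ ⟨0, G.Npos⟩ ν :=
    mul_pos (G.Q_root_pos μ) (G.Q_root_pos ν)
  linarith

lemma dval_pos (dh : Fin G.N → ℕ) (hdh : dh ≠ 0) (ν : Fin G.N) : 0 < G.dval dh ν := by
  classical
  obtain ⟨μ₀, hμ₀⟩ := Function.ne_iff.mp hdh
  have hμ₀' : 0 < dh μ₀ := Nat.pos_of_ne_zero hμ₀
  unfold dval
  rw [Matrix.vecMul, dotProduct]
  apply Finset.sum_pos'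
  · exact fun μ _ => mul_nonneg (by positivity) (G.V_pos μ ν).le
  · exact ⟨μ₀, Finset.mem_univ _,
      mul_pos (by exact_mod_cast hμ₀') (G.V_pos μ₀ ν)⟩

end DualGraph
namespace DualGraph

variable (G : DualGraph)

lemma dval_vecMul_M (dh : Fin G.N → ℕ) :
    (G.dval dh) ᵥ* (G.Pᵀ * G.P) = fun ν => (dh ν : ℚ) := by
  unfold dval
  rw [Matrix.vecMul_vecMul, G.V_mul_M, Matrix.vecMul_one]

lemma M_symm (μ ν : Fin G.N) : (G.Pᵀ * G.P) μ ν = (G.Pᵀ * G.P) ν μ := by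
  have ht : (G.Pᵀ * G.P)ᵀ = G.Pᵀ * G.P := by
    rw [Matrix.transpose_mul, Matrix.transpose_transpose]
  conv_lhs => rw [← ht]
  rfl

/-- Off-diagonal entries of `PᵀP` are `-1` or `0`. -/
lemma offdiag_cases {μ ν : Fin G.N} (hne : μ ≠ ν) :
    (G.Pᵀ * G.P) μ ν = -1 ∨ (G.Pᵀ * G.P) μ ν = 0 := by
  classical
  have hM : (G.Pᵀ * G.P) μ ν = ∑ ρ, G.P ρ μ * G.P ρ ν := by
    rw [Matrix.mul_apply]; rfl
  have hterm : ∀ ρ, G.P ρ μ * G.P ρ ν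
      = (if ρ = μ ∧ G.prox μ ν then (-1:ℚ) else 0)
      + (if ρ = ν ∧ G.prox ν μ then (-1:ℚ) else 0)
      + (if G.prox ρ μ ∧ G.prox ρ ν then (1:ℚ) else 0) := by
    intro ρ
    unfold P
    rcases eq_or_ne ρ μ with rfl | hρμ
    · rw [if_pos rfl, if_neg hne, one_mul,
        if_neg (fun h : ρ = ν ∧ _ => hne h.1),
        if_neg (fun h : G.prox ρ ρ ∧ _ => G.prox_irrefl ρ h.1)]
      by_cases hp : G.prox ρ ν
      · rw [if_pos hp, if_pos ⟨rfl, hp⟩]; ring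
      · rw [if_neg hp, if_neg (fun h : ρ = ρ ∧ _ => hp h.2)]; ring
    · rcases eq_or_ne ρ ν with rfl | hρν
      · rw [if_pos rfl, if_neg hρμ, mul_one,
          if_neg (fun h : ρ = μ ∧ _ => hρμ h.1),
          if_neg (fun h : G.prox ρ μ ∧ G.prox ρ ρ => G.prox_irrefl ρ h.2)]
        by_cases hp : G.prox ρ μ
        · rw [if_pos hp, if_pos ⟨rfl, hp⟩]; ring
        · rw [if_neg hp, if_neg (fun h : ρ = ρ ∧ _ => hp h.2)]; ring
      · rw [if_neg hρμ, if_neg hρν,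
          if_neg (fun h : ρ = μ ∧ _ => hρμ h.1),
          if_neg (fun h : ρ = ν ∧ _ => hρν h.1)]
        by_cases h1 : G.prox ρ μ <;> by_cases h2 : G.prox ρ ν
        · rw [if_pos h1, if_pos h2, if_pos ⟨h1, h2⟩]; ring
        · rw [if_pos h1, if_neg h2, if_neg (fun h : _ ∧ _ => h2 h.2)]; ring
        · rw [if_neg h1, if_pos h2, if_neg (fun h : _ ∧ _ => h1 h.1)]; ring
        · rw [if_neg h1, if_neg h2, if_neg (fun h : _ ∧ _ => h1 h.1)]; ring
  rw [hM, Finset.sum_congr rfl (fun ρ _ => hterm ρ), Finset.sum_add_distrib,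
    Finset.sum_add_distrib]
  have e1 : (∑ ρ, if ρ = μ ∧ G.prox μ ν then (-1:ℚ) else 0)
      = if G.prox μ ν then (-1:ℚ) else 0 := by
    by_cases hp : G.prox μ ν
    · rw [if_pos hp]
      rw [Finset.sum_congr rfl (fun ρ _ =>
        show (if ρ = μ ∧ G.prox μ ν then (-1:ℚ) else 0) = (if ρ = μ then (-1:ℚ) else 0) by
          by_cases h : ρ = μ
          · rw [if_pos ⟨h, hp⟩, if_pos h]
          · rw [if_neg (fun hh : _ ∧ _ => h hh.1), if_neg h])]
      simp
    · rw [if_neg hp]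
      apply Finset.sum_eq_zero
      intro ρ _
      rw [if_neg (fun h : _ ∧ _ => hp h.2)]
  have e2 : (∑ ρ, if ρ = ν ∧ G.prox ν μ then (-1:ℚ) else 0)
      = if G.prox ν μ then (-1:ℚ) else 0 := by
    by_cases hp : G.prox ν μ
    · rw [if_pos hp]
      rw [Finset.sum_congr rfl (fun ρ _ =>
        show (if ρ = ν ∧ G.prox ν μ then (-1:ℚ) else 0) = (if ρ = ν then (-1:ℚ) else 0) by
          by_cases h : ρ = ν
          · rw [if_pos ⟨h, hp⟩, if_pos h]
          · rw [if_neg (fun hh : _ ∧ _ => h hh.1), if_neg h])]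
      simp
    · rw [if_neg hp]
      apply Finset.sum_eq_zero
      intro ρ _
      rw [if_neg (fun h : _ ∧ _ => hp h.2)]
  have e3 : (∑ ρ, if G.prox ρ μ ∧ G.prox ρ ν then (1:ℚ) else 0)
      = ((Finset.univ.filter (fun ρ => G.prox ρ μ ∧ G.prox ρ ν)).card : ℚ) := by
    rw [Finset.sum_boole]
  rw [e1, e2, e3]
  set C := Finset.univ.filter (fun ρ => G.prox ρ μ ∧ G.prox ρ ν) with hC
  rcases Finset.eq_empty_or_nonempty C with hCe | ⟨ρ₀, hρ₀⟩
  · rw [hCe, Finset.card_empty]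
    by_cases h1 : G.prox μ ν
    · rw [if_pos h1, if_neg (G.prox_asymm_s3 h1)]; left; ring
    · by_cases h2 : G.prox ν μ
      · rw [if_neg h1, if_pos h2]; left; ring
      · rw [if_neg h1, if_neg h2]; right; ring
  · -- C = {ρ₀}
    obtain ⟨hp1, hp2⟩ := (Finset.mem_filter.mp hρ₀).2
    have hCsing : C = {ρ₀} := by
      apply Finset.eq_singleton_iff_unique_mem.mpr
      refine ⟨hρ₀, fun ρ' hρ' => ?_⟩
      obtain ⟨hq1, hq2⟩ := (Finset.mem_filter.mp hρ').2
      by_contra hne'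
      rcases lt_or_gt_of_ne hne' with hlt | hlt
      · exact ((G.prox_pair hp1 hp2 hne).2 ρ' hlt) ⟨hq1, hq2⟩
      · exact ((G.prox_pair hq1 hq2 hne).2 ρ₀ hlt) ⟨hp1, hp2⟩
    rw [hCsing, Finset.card_singleton]
    right
    rcases (G.prox_pair hp1 hp2 hne).1 with h1 | h1
    · rw [if_pos h1, if_neg (G.prox_asymm_s3 h1)]; ring
    · rw [if_neg (G.prox_asymm_s3 h1), if_pos h1]; ring

lemma offdiag_nonpos {μ ν : Fin G.N} (hne : μ ≠ ν) : (G.Pᵀ * G.P) μ ν ≤ 0 := by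
  rcases G.offdiag_cases hne with h | h <;> rw [h] <;> norm_num

lemma offdiag_zero {μ ν : Fin G.N} (hne : μ ≠ ν) (hna : ¬ G.adj μ ν) :
    (G.Pᵀ * G.P) μ ν = 0 := by
  rcases G.offdiag_cases hne with h | h
  · exact absurd ⟨hne, h⟩ hna
  · exact h

end DualGraph
namespace DualGraph

variable (G : DualGraph)

lemma kvec_vecMul_M : G.kvec ᵥ* (G.Pᵀ * G.P) = fun ν => ∑ μ, G.P μ ν := by
  classical
  have hk : G.kvec = (fun _ => (1:ℚ)) ᵥ* G.Qᵀ := by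
    funext ν
    unfold kvec
    rw [Matrix.vecMul, dotProduct]
    simp [Matrix.transpose_apply]
  rw [hk, Matrix.vecMul_vecMul]
  have h : G.Qᵀ * (G.Pᵀ * G.P) = G.P := by
    rw [← Matrix.mul_assoc, ← Matrix.transpose_mul, G.P_mul_Q, Matrix.transpose_one,
      Matrix.one_mul]
  rw [h]
  funext ν
  rw [Matrix.vecMul, dotProduct]
  simp

lemma sum_P_add_sq (ν : Fin G.N) : ∑ μ, (G.P μ ν + G.P μ ν * G.P μ ν) = 2 := by
  classical
  have hterm : ∀ μ, G.P μ ν + G.P μ ν * G.P μ ν = if μ = ν then (2:ℚ) else 0 := by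
    intro μ
    unfold P
    rcases eq_or_ne μ ν with rfl | hne
    · rw [if_pos rfl, if_pos rfl]; ring
    · rw [if_neg hne, if_neg hne]
      by_cases hp : G.prox μ ν
      · rw [if_pos hp]; ring
      · rw [if_neg hp]; ring
  rw [Finset.sum_congr rfl (fun μ _ => hterm μ)]
  simp

lemma sum_offdiag_M (ν : Fin G.N) :
    ∑ μ ∈ Finset.univ.erase ν, (G.Pᵀ * G.P) μ ν = -(G.valence ν : ℚ) := by
  classical
  have hterm : ∀ μ ∈ Finset.univ.erase ν,
      (G.Pᵀ * G.P) μ ν = if G.adj ν μ then (-1:ℚ) else 0 := by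
    intro μ hμ
    have hne : μ ≠ ν := Finset.ne_of_mem_erase hμ
    rcases G.offdiag_cases hne with h | h
    · rw [h, if_pos ⟨hne.symm, by rw [G.M_symm]; exact h⟩]
    · rw [h, if_neg ?_]
      intro hadj
      have := hadj.2
      rw [G.M_symm] at this
      rw [this] at h
      norm_num at h
  rw [Finset.sum_congr rfl hterm]
  have hsub : Finset.univ.filter (fun μ => G.adj ν μ) ⊆ Finset.univ.erase ν := by
    intro μ hμ
    have hadj : G.adj ν μ := (Finset.mem_filter.mp hμ).2
    exact Finset.mem_erase.mpr ⟨fun h => hadj.1 h.symm, Finset.mem_univ _⟩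
  rw [Finset.sum_ite, Finset.sum_const, Finset.sum_const_zero, add_zero,
    Finset.filter_erase, Finset.erase_eq_of_notMem
      (fun h => ((Finset.mem_filter.mp h).2).1 rfl)]
  show ((G.nbrs ν).card) • (-1 : ℚ) = -(G.valence ν : ℚ)
  rw [nsmul_eq_mul]
  unfold valence
  ring

lemma one_vecMul_M (ν : Fin G.N) :
    ((fun _ => (1:ℚ)) ᵥ* (G.Pᵀ * G.P)) ν = ∑ μ, (G.Pᵀ * G.P) μ ν := by
  rw [Matrix.vecMul, dotProduct]
  simp

/-- Key identity: `(k·M + 𝟙·M)_ν = 2 − v(ν)`. -/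
lemma kvec_one_vecMul (ν : Fin G.N) :
    (G.kvec ᵥ* (G.Pᵀ * G.P)) ν + ((fun _ => (1:ℚ)) ᵥ* (G.Pᵀ * G.P)) ν
      = 2 - (G.valence ν : ℚ) := by
  classical
  rw [G.kvec_vecMul_M, G.one_vecMul_M]
  have hMd : (G.Pᵀ * G.P) ν ν = ∑ μ, G.P μ ν * G.P μ ν := by
    rw [Matrix.mul_apply]; rfl
  have hsplit : ∑ μ, (G.Pᵀ * G.P) μ ν
      = (G.Pᵀ * G.P) ν ν + ∑ μ ∈ Finset.univ.erase ν, (G.Pᵀ * G.P) μ ν := by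
    rw [← Finset.add_sum_erase _ _ (Finset.mem_univ ν)]
  rw [hsplit, G.sum_offdiag_M, hMd, ← add_assoc, ← Finset.sum_add_distrib]
  rw [G.sum_P_add_sq]
  ring

end DualGraph
namespace DualGraph

variable (G : DualGraph)

/-- `PᵀP` is positive definite: the quadratic form vanishes only at `0`. -/
lemma eq_zero_of_quadForm (x : Fin G.N → ℚ) (h : (x ᵥ* (G.Pᵀ * G.P)) ⬝ᵥ x = 0) :
    x = 0 := by
  classical
  have h1 : x ᵥ* (G.Pᵀ * G.P) = (G.P *ᵥ x) ᵥ* G.P := by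
    rw [← Matrix.vecMul_vecMul, Matrix.vecMul_transpose]
  rw [h1, ← Matrix.dotProduct_mulVec] at h
  have hy : G.P *ᵥ x = 0 := by
    funext i
    have hnn : ∀ j ∈ Finset.univ, 0 ≤ (G.P *ᵥ x) j * (G.P *ᵥ x) j :=
      fun j _ => mul_self_nonneg _
    have := (Finset.sum_eq_zero_iff_of_nonneg hnn).mp h i (Finset.mem_univ i)
    exact mul_self_eq_zero.mp this
  have : x = (G.Q * G.P) *ᵥ x := by rw [G.Q_mul_P, Matrix.one_mulVec]
  rw [this, ← Matrix.mulVec_mulVec, hy, Matrix.mulVec_zero]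

end DualGraph
/-- The support of a jumping number contains a vertex which is either a star
or corresponds to a simple factor of the ideal. -/
theorem stmt3 (G : DualGraph) (dh : Fin G.N → ℕ) (hdh : dh ≠ 0)
    (f : Fin G.N → ℤ) (hf : G.Antinef (fun i => (f i : ℚ))) :
    ∃ ν, (∀ η, G.lamA dh (f ν : ℚ) ν ≤ G.lamA dh (f η : ℚ) η) ∧
      (3 ≤ G.valence ν ∨ 0 < dh ν) := by
  classical
  set d := G.dval dh with hd
  have hdpos : ∀ ν, 0 < d ν := fun ν => G.dval_pos dh hdh ν
  set a : Fin G.N → ℚ := fun η => (f η : ℚ) + G.kvec η + 1 with ha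
  have hlam : ∀ η, G.lamA dh (f η : ℚ) η = a η / d η := fun η => rfl
  obtain ⟨ν₀, -, hmin0⟩ := Finset.exists_min_image Finset.univ
    (fun ν => a ν / d ν) ⟨⟨0, G.Npos⟩, Finset.mem_univ _⟩
  have hmin : ∀ η, a ν₀ / d ν₀ ≤ a η / d η := fun η => hmin0 η (Finset.mem_univ η)
  by_contra hcon
  push_neg at hcon
  set l0 := a ν₀ / d ν₀ with hl0
  set S := Finset.univ.filter (fun η => a η / d η = l0) with hSdef
  have hmemS : ∀ {η : Fin G.N}, η ∈ S ↔ a η / d η = l0 := by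
    intro η; simp [hSdef]
  have hν₀S : ν₀ ∈ S := hmemS.mpr rfl
  have hbad : ∀ η ∈ S, G.valence η ≤ 2 ∧ dh η = 0 := by
    intro η hη
    have heq := hmemS.mp hη
    have hm : ∀ ρ, G.lamA dh (f η : ℚ) η ≤ G.lamA dh (f ρ : ℚ) ρ := by
      intro ρ; rw [hlam, hlam, heq]; exact hmin ρ
    obtain ⟨h1, h2⟩ := hcon η hm
    exact ⟨by omega, by omega⟩
  set g : Fin G.N → ℚ := fun η => a η - l0 * d η with hg
  have hg0 : ∀ η, 0 ≤ g η := by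
    intro η
    have h := hmin η
    rw [le_div_iff₀ (hdpos η)] at h
    show 0 ≤ a η - l0 * d η
    linarith
  have hgS : ∀ η, η ∈ S ↔ g η = 0 := by
    intro η
    rw [hmemS, div_eq_iff (hdpos η).ne']
    show a η = l0 * d η ↔ a η - l0 * d η = 0
    constructor <;> intro h <;> linarith
  have hgM : ∀ η, (g ᵥ* (G.Pᵀ * G.P)) η
      = ((fun i => ((f i : ℚ))) ᵥ* (G.Pᵀ * G.P)) η + 2 - (G.valence η : ℚ)
        - l0 * (dh η : ℚ) := by
    intro η
    have hgdef : g = ((fun i => ((f i : ℚ))) + G.kvec + (fun _ => (1:ℚ))) - l0 • d := by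
      funext i
      rfl
    rw [hgdef, Matrix.sub_vecMul, Matrix.add_vecMul, Matrix.add_vecMul, Matrix.smul_vecMul]
    have hdM := congrFun (G.dval_vecMul_M dh) η
    have hk := G.kvec_one_vecMul η
    simp only [Pi.sub_apply, Pi.add_apply, Pi.smul_apply, smul_eq_mul, ← hd]
    rw [hdM]
    linarith
  -- every neighbour of a vertex of S lies in S
  have hnbr : ∀ η ∈ S, ∀ μ, G.adj μ η → μ ∈ S := by
    intro η hη μ hadj
    have hsum : (g ᵥ* (G.Pᵀ * G.P)) η = ∑ ρ, g ρ * (G.Pᵀ * G.P) ρ η := by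
      rw [Matrix.vecMul, dotProduct]
    have hsplit : ∑ ρ, g ρ * (G.Pᵀ * G.P) ρ η
        = g η * (G.Pᵀ * G.P) η η
          + ∑ ρ ∈ Finset.univ.erase η, g ρ * (G.Pᵀ * G.P) ρ η := by
      rw [← Finset.add_sum_erase _ _ (Finset.mem_univ η)]
    have hgη : g η = 0 := (hgS η).mp hη
    have hval : (g ᵥ* (G.Pᵀ * G.P)) η
        = ∑ ρ ∈ Finset.univ.erase η, g ρ * (G.Pᵀ * G.P) ρ η := by
      rw [hsum, hsplit, hgη, zero_mul, zero_add]
    have hge : 0 ≤ (g ᵥ* (G.Pᵀ * G.P)) η := by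
      rw [hgM η]
      obtain ⟨hv, hdh0⟩ := hbad η hη
      have hfη := hf η
      have : ((G.valence η : ℚ)) ≤ 2 := by exact_mod_cast hv
      rw [hdh0]
      push_cast
      linarith
    have hterm_nonpos : ∀ ρ ∈ Finset.univ.erase η, g ρ * (G.Pᵀ * G.P) ρ η ≤ 0 := by
      intro ρ hρ
      exact mul_nonpos_iff.mpr
        (Or.inl ⟨hg0 ρ, G.offdiag_nonpos (Finset.ne_of_mem_erase hρ)⟩)
    have hsum0 : ∑ ρ ∈ Finset.univ.erase η, g ρ * (G.Pᵀ * G.P) ρ η = 0 := by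
      have h1 : ∑ ρ ∈ Finset.univ.erase η, g ρ * (G.Pᵀ * G.P) ρ η ≤ 0 :=
        Finset.sum_nonpos hterm_nonpos
      rw [hval] at hge
      linarith
    have hμη : μ ≠ η := hadj.1
    have hμmem : μ ∈ Finset.univ.erase η := Finset.mem_erase.mpr ⟨hμη, Finset.mem_univ _⟩
    have hterm0 := (Finset.sum_eq_zero_iff_of_nonpos hterm_nonpos).mp hsum0 μ hμmem
    rw [hadj.2] at hterm0
    have : g μ = 0 := by linarith
    exact (hgS μ).mpr this
  -- the quadratic-form contradiction
  set x : Fin G.N → ℚ := fun μ => if μ ∈ S then d μ else 0 with hx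
  have hxM : ∀ η ∈ S, (x ᵥ* (G.Pᵀ * G.P)) η = 0 := by
    intro η hη
    have h1 : (x ᵥ* (G.Pᵀ * G.P)) η = ∑ ρ, x ρ * (G.Pᵀ * G.P) ρ η := by
      rw [Matrix.vecMul, dotProduct]
    have h2 : ∀ ρ, x ρ * (G.Pᵀ * G.P) ρ η = d ρ * (G.Pᵀ * G.P) ρ η := by
      intro ρ
      by_cases hρ : ρ ∈ S
      · simp only [hx, if_pos hρ]
      · have hρη : ρ ≠ η := fun h => hρ (h ▸ hη)
        have hna : ¬ G.adj ρ η := fun hadj => hρ (hnbr η hη ρ hadj)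
        rw [G.offdiag_zero hρη hna, mul_zero, mul_zero]
    have h3 : (G.dval dh ᵥ* (G.Pᵀ * G.P)) η = ∑ ρ, d ρ * (G.Pᵀ * G.P) ρ η := by
      rw [Matrix.vecMul, dotProduct]
    calc (x ᵥ* (G.Pᵀ * G.P)) η
        = ∑ ρ, d ρ * (G.Pᵀ * G.P) ρ η := by
          rw [h1]; exact Finset.sum_congr rfl (fun ρ _ => h2 ρ)
      _ = (G.dval dh ᵥ* (G.Pᵀ * G.P)) η := h3.symm
      _ = (dh η : ℚ) := congrFun (G.dval_vecMul_M dh) η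
      _ = 0 := by rw [(hbad η hη).2]; norm_num
  have hE : (x ᵥ* (G.Pᵀ * G.P)) ⬝ᵥ x = 0 := by
    rw [dotProduct]
    apply Finset.sum_eq_zero
    intro η _
    by_cases hη : η ∈ S
    · rw [hxM η hη, zero_mul]
    · simp only [hx, if_neg hη, mul_zero]
  have hx0 : x = 0 := G.eq_zero_of_quadForm x hE
  have hxν₀ : x ν₀ = d ν₀ := by simp only [hx, if_pos hν₀S]
  have := congrFun hx0 ν₀
  rw [hxν₀] at this
  exact absurd this (hdpos ν₀).ne'
end

section
/- For all vertices μ, γ, ν₁, ν₂ of Γ: ρ_{[μ,γ]}(ν₁) < ρ_{[μ,γ]}(ν₂) if and only if [μ,ν₁]∩[μ,γ] ⊊ [μ,ν₂]∩[μ,γ]. In particular, ρ_{[μ,γ]} is strictly increasing along the path going from μ to γ and stays constant on any path going away from [μ,γ]. Moreover, if μ∼γ, then ρ_{[μ,γ]}(γ) = (V_{γμ}+1)/V_{μμ}. -/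
open Matrix BigOperators

open scoped Classical

/-! ### Auxiliary development -/

noncomputable section
namespace DGAux

open DualGraph

variable (G : DualGraph)

/-- The matrix of the proximity relation. -/
def E : Matrix (Fin G.N) (Fin G.N) ℚ := fun μ ν => if G.prox μ ν then 1 else 0

/-- The intersection-form matrix `M = PᵀP`. -/
def M : Matrix (Fin G.N) (Fin G.N) ℚ := G.Pᵀ * G.P

lemma prox_irrefl (μ : Fin G.N) : ¬ G.prox μ μ := fun h => lt_irrefl _ (G.prox_lt h)

lemma prox_antisymm {μ ν : Fin G.N} (h : G.prox μ ν) : ¬ G.prox ν μ :=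
  fun h' => absurd (G.prox_lt h) (not_lt.2 (le_of_lt (G.prox_lt h')))

lemma P_eq : G.P = 1 - E G := by
  ext μ ν
  by_cases h : μ = ν
  · subst h; simp [DualGraph.P, E, prox_irrefl G μ]
  · simp [DualGraph.P, E, h, Matrix.one_apply_ne h]
    by_cases hp : G.prox μ ν <;> simp [hp]

lemma Epow_support : ∀ (k : ℕ) (μ ν : Fin G.N), ((E G) ^ k) μ ν ≠ 0 → (ν : ℕ) + k ≤ (μ : ℕ) := by
  intro k
  induction k with
  | zero =>
    intro μ ν h
    simp only [pow_zero] at h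
    rcases eq_or_ne μ ν with rfl | hne
    · omega
    · exact absurd (Matrix.one_apply_ne hne) h
  | succ k ih =>
    intro μ ν h
    rw [pow_succ'] at h
    rw [Matrix.mul_apply] at h
    obtain ⟨c, hc⟩ := Finset.exists_ne_zero_of_sum_ne_zero h
    have h1 : (E G) μ c ≠ 0 := fun hz => hc.2 (by rw [hz, zero_mul])
    have h2 : ((E G) ^ k) c ν ≠ 0 := fun hz => hc.2 (by rw [hz, mul_zero])
    have hprox : G.prox μ c := by
      by_contra hp; exact h1 (by simp [E, hp])
    have hc1 : (c : ℕ) < (μ : ℕ) := G.prox_lt hprox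
    have hc2 := ih c ν h2
    omega

lemma Epow_nonneg : ∀ (k : ℕ) (μ ν : Fin G.N), 0 ≤ ((E G) ^ k) μ ν := by
  intro k
  induction k with
  | zero =>
    intro μ ν
    rcases eq_or_ne μ ν with rfl | hne
    · simp
    · simp [Matrix.one_apply_ne hne]
  | succ k ih =>
    intro μ ν
    rw [pow_succ, Matrix.mul_apply]
    refine Finset.sum_nonneg fun c _ => mul_nonneg (ih μ c) ?_
    by_cases hp : G.prox c ν <;> simp [E, hp]

lemma EpowN : (E G) ^ (G.N) = 0 := by
  ext μ ν
  by_contra h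
  have := Epow_support G G.N μ ν (by simpa using h)
  have := ν.isLt
  have := μ.isLt
  omega

/-- An explicit inverse of `P`. -/
def QQ : Matrix (Fin G.N) (Fin G.N) ℚ := ∑ k ∈ Finset.range G.N, (E G) ^ k

lemma P_mul_QQ : G.P * QQ G = 1 := by
  rw [P_eq, QQ, sub_mul, one_mul, Finset.mul_sum]
  have : ∀ k ∈ Finset.range G.N, (E G) * (E G) ^ k = (E G) ^ (k + 1) := by
    intro k _; rw [pow_succ']
  rw [Finset.sum_congr rfl this]
  have htel : ∑ k ∈ Finset.range G.N, ((E G) ^ k - (E G) ^ (k + 1)) = (E G) ^ 0 - (E G) ^ G.N :=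
    Finset.sum_range_sub' (fun k => (E G) ^ k) G.N
  rw [Finset.sum_sub_distrib] at htel
  have := EpowN G
  rw [pow_zero] at htel
  rw [sub_eq_iff_eq_add] at htel
  rw [htel, this]
  abel

lemma QQ_mul_P : QQ G * G.P = 1 := mul_eq_one_comm.1 (P_mul_QQ G)

lemma Q_eq : G.Q = QQ G := Matrix.inv_eq_right_inv (P_mul_QQ G)

lemma QQ_nonneg (μ ν : Fin G.N) : 0 ≤ QQ G μ ν := by
  rw [QQ]
  rw [Matrix.sum_apply]
  exact Finset.sum_nonneg fun k _ => Epow_nonneg G k μ ν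

lemma Epow_root : ∀ (n : ℕ) (μ : Fin G.N), (μ : ℕ) = n →
    ∃ k, k ≤ n ∧ 1 ≤ ((E G) ^ k) μ G.root := by
  intro n
  induction n using Nat.strong_induction_on with
  | _ n ih =>
    intro μ hμ
    rcases Nat.eq_zero_or_pos (μ : ℕ) with h0 | hpos
    · refine ⟨0, by omega, ?_⟩
      have : μ = G.root := by apply Fin.ext; simp [DualGraph.root, h0]
      rw [this]; simp
    · obtain ⟨ν, hν⟩ := G.prox_nonempty μ hpos
      have hlt : (ν : ℕ) < (μ : ℕ) := G.prox_lt hν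
      obtain ⟨k, hk, hk1⟩ := ih (ν : ℕ) (by omega) ν rfl
      refine ⟨k + 1, by omega, ?_⟩
      rw [pow_succ', Matrix.mul_apply]
      have hterm : (1 : ℚ) ≤ (E G) μ ν * ((E G) ^ k) ν G.root := by
        have : (E G) μ ν = 1 := by simp [E, hν]
        rw [this, one_mul]; exact hk1
      calc (1 : ℚ) ≤ (E G) μ ν * ((E G) ^ k) ν G.root := hterm
        _ ≤ ∑ c, (E G) μ c * ((E G) ^ k) c G.root := by
            apply Finset.single_le_sum (f := fun c => (E G) μ c * ((E G) ^ k) c G.root)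
            · intro c _
              refine mul_nonneg ?_ (Epow_nonneg G k c G.root)
              by_cases hp : G.prox μ c <;> simp [E, hp]
            · exact Finset.mem_univ ν

lemma QQ_root_ge_one (μ : Fin G.N) : 1 ≤ QQ G μ G.root := by
  obtain ⟨k, hk, hk1⟩ := Epow_root G (μ : ℕ) μ rfl
  rw [QQ, Matrix.sum_apply]
  calc (1 : ℚ) ≤ ((E G) ^ k) μ G.root := hk1
    _ ≤ ∑ j ∈ Finset.range G.N, ((E G) ^ j) μ G.root := by
        apply Finset.single_le_sum (f := fun j => ((E G) ^ j) μ G.root)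
        · intro j _; exact Epow_nonneg G j μ G.root
        · exact Finset.mem_range.2 (lt_of_le_of_lt hk μ.isLt)

lemma M_mul_VQ : M G * (QQ G * (QQ G)ᵀ) = 1 := by
  have h1 : G.P * (QQ G * (QQ G)ᵀ) = (QQ G)ᵀ := by
    rw [← Matrix.mul_assoc, P_mul_QQ, Matrix.one_mul]
  have h2 : G.Pᵀ * (QQ G)ᵀ = 1 := by
    rw [← Matrix.transpose_mul, QQ_mul_P, Matrix.transpose_one]
  rw [M, Matrix.mul_assoc, h1, h2]

lemma V_eq : G.V = QQ G * (QQ G)ᵀ := Matrix.inv_eq_right_inv (M_mul_VQ G)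

lemma MV : M G * G.V = 1 := by rw [V_eq]; exact M_mul_VQ G

lemma V_apply (a b : Fin G.N) : G.V a b = ∑ c, QQ G a c * QQ G b c := by
  rw [V_eq, Matrix.mul_apply]
  exact Finset.sum_congr rfl fun c _ => by rw [Matrix.transpose_apply]

lemma V_symm (a b : Fin G.N) : G.V a b = G.V b a := by
  rw [V_apply, V_apply]
  exact Finset.sum_congr rfl fun c _ => mul_comm _ _

lemma V_ge_one (a b : Fin G.N) : 1 ≤ G.V a b := by
  rw [V_apply]
  calc (1 : ℚ) ≤ QQ G a G.root * QQ G b G.root := by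
        have ha := QQ_root_ge_one G a
        have hb := QQ_root_ge_one G b
        nlinarith
    _ ≤ ∑ c, QQ G a c * QQ G b c := by
        apply Finset.single_le_sum (f := fun c => QQ G a c * QQ G b c)
        · intro c _; exact mul_nonneg (QQ_nonneg G a c) (QQ_nonneg G b c)
        · exact Finset.mem_univ G.root

lemma V_pos (a b : Fin G.N) : 0 < G.V a b := lt_of_lt_of_le one_pos (V_ge_one G a b)

lemma P_mulVec_injective {x : Fin G.N → ℚ} (h : G.P.mulVec x = 0) : x = 0 := by
  have : QQ G *ᵥ (G.P *ᵥ x) = x := by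
    rw [Matrix.mulVec_mulVec, QQ_mul_P, Matrix.one_mulVec]
  rw [h, Matrix.mulVec_zero] at this
  exact this.symm

lemma quad_eq (x : Fin G.N → ℚ) :
    x ⬝ᵥ (M G).mulVec x = (G.P.mulVec x) ⬝ᵥ (G.P.mulVec x) := by
  rw [M, ← Matrix.mulVec_mulVec, Matrix.dotProduct_mulVec, Matrix.vecMul_transpose]

/-- The core separation lemma: a vector supported on a set `A` on which `M x` vanishes
is zero. -/
lemma CLcore {A : Set (Fin G.N)} {x : Fin G.N → ℚ}
    (h0 : ∀ i, i ∉ A → x i = 0) (h1 : ∀ i ∈ A, (M G).mulVec x i = 0) : x = 0 := by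
  have hzero : x ⬝ᵥ (M G).mulVec x = 0 := by
    apply Finset.sum_eq_zero
    intro i _
    by_cases hi : i ∈ A
    · rw [h1 i hi, mul_zero]
    · rw [h0 i hi, zero_mul]
  rw [quad_eq] at hzero
  have hP : G.P.mulVec x = 0 := by
    funext i
    have hsq : ∀ j ∈ Finset.univ, 0 ≤ (G.P.mulVec x j) * (G.P.mulVec x j) :=
      fun j _ => mul_self_nonneg _
    have := (Finset.sum_eq_zero_iff_of_nonneg hsq).1 hzero i (Finset.mem_univ i)
    simpa [mul_self_eq_zero] using this
  exact P_mulVec_injective G hP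

lemma V_posdef {x : Fin G.N → ℚ} (hx : x ≠ 0) : 0 < x ⬝ᵥ G.V.mulVec x := by
  have key : x ⬝ᵥ G.V.mulVec x = ((QQ G)ᵀ.mulVec x) ⬝ᵥ ((QQ G)ᵀ.mulVec x) := by
    rw [V_eq, ← Matrix.mulVec_mulVec, Matrix.dotProduct_mulVec, Matrix.mulVec_transpose]
  rw [key]
  have hnn : 0 ≤ ((QQ G)ᵀ.mulVec x) ⬝ᵥ ((QQ G)ᵀ.mulVec x) :=
    Finset.sum_nonneg fun j _ => mul_self_nonneg _
  rcases lt_or_eq_of_le hnn with h | h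
  · exact h
  · exfalso
    have hQx : (QQ G)ᵀ.mulVec x = 0 := by
      funext i
      have hsq : ∀ j ∈ Finset.univ, 0 ≤ ((QQ G)ᵀ.mulVec x j) * ((QQ G)ᵀ.mulVec x j) :=
        fun j _ => mul_self_nonneg _
      have := (Finset.sum_eq_zero_iff_of_nonneg hsq).1 h.symm i (Finset.mem_univ i)
      simpa [mul_self_eq_zero] using this
    apply hx
    have h2 : G.Pᵀ *ᵥ ((QQ G)ᵀ *ᵥ x) = x := by
      rw [Matrix.mulVec_mulVec, ← Matrix.transpose_mul, QQ_mul_P, Matrix.transpose_one,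
        Matrix.one_mulVec]
    rw [hQx, Matrix.mulVec_zero] at h2
    exact h2.symm

lemma CS_strict {a b : Fin G.N} (hab : a ≠ b) : G.V a b * G.V a b < G.V a a * G.V b b := by
  set x : Fin G.N → ℚ := fun i => (if i = a then G.V b b else 0) + (if i = b then -(G.V a b) else 0)
    with hxdef
  have hxa : x a = G.V b b := by simp [hxdef, hab]
  have hxne : x ≠ 0 := by
    intro h
    have := congrFun h a
    rw [hxa] at this
    exact absurd this (ne_of_gt (V_pos G b b))
  have hmv : ∀ j, G.V.mulVec x j = G.V j a * G.V b b - G.V j b * G.V a b := by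
    intro j
    rw [Matrix.mulVec, dotProduct]
    simp only [hxdef, mul_add, mul_ite, mul_zero, mul_neg]
    rw [Finset.sum_add_distrib, Finset.sum_ite_eq' Finset.univ a, Finset.sum_ite_eq' Finset.univ b]
    simp only [Finset.mem_univ, if_true]
    ring
  have hquad := V_posdef G hxne
  have hval : x ⬝ᵥ G.V.mulVec x = G.V b b * (G.V a a * G.V b b - G.V a b * G.V a b) := by
    rw [dotProduct]
    have hfun : ∀ c, x c * G.V.mulVec x c =
        (if c = a then G.V b b * (G.V c a * G.V b b - G.V c b * G.V a b) else 0) +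
        (if c = b then -G.V a b * (G.V c a * G.V b b - G.V c b * G.V a b) else 0) := by
      intro c
      rw [hmv c]
      simp only [hxdef]
      by_cases h1 : c = a <;> by_cases h2 : c = b <;> simp [h1, h2, hab, hab.symm] <;> ring
    rw [Finset.sum_congr rfl (fun c _ => hfun c)]
    rw [Finset.sum_add_distrib, Finset.sum_ite_eq' Finset.univ a, Finset.sum_ite_eq' Finset.univ b]
    have hsym : G.V b a = G.V a b := V_symm G b a
    simp only [Finset.mem_univ, if_true]
    rw [hsym]
    ring
  rw [hval] at hquad
  have hVbb := V_pos G b b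
  nlinarith


/-! ### Entries of `M` -/

/-- The set of vertices proximate to both `μ` and `ν`. -/
def common (μ ν : Fin G.N) : Finset (Fin G.N) :=
  Finset.univ.filter (fun ρ => G.prox ρ μ ∧ G.prox ρ ν)

lemma common_subsingleton {μ ν : Fin G.N} (hne : μ ≠ ν) {ρ₁ ρ₂ : Fin G.N}
    (h1 : ρ₁ ∈ common G μ ν) (h2 : ρ₂ ∈ common G μ ν) : ρ₁ = ρ₂ := by
  simp only [common, Finset.mem_filter] at h1 h2
  by_contra hne'
  rcases lt_or_gt_of_ne hne' with hlt | hlt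
  · exact (G.prox_pair h2.2.1 h2.2.2 hne).2 ρ₁ hlt ⟨h1.2.1, h1.2.2⟩
  · exact (G.prox_pair h1.2.1 h1.2.2 hne).2 ρ₂ hlt ⟨h2.2.1, h2.2.2⟩

lemma common_card_le {μ ν : Fin G.N} (hne : μ ≠ ν) : (common G μ ν).card ≤ 1 :=
  Finset.card_le_one.2 (fun _ h1 _ h2 => common_subsingleton G hne h1 h2)

lemma M_apply (μ ν : Fin G.N) : M G μ ν = ∑ ρ, G.P ρ μ * G.P ρ ν := by
  rw [M, Matrix.mul_apply]
  exact Finset.sum_congr rfl fun ρ _ => by rw [Matrix.transpose_apply]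

lemma common_empty_of_not_prox {μ ν : Fin G.N} (hne : μ ≠ ν)
    (h : ¬(G.prox μ ν ∨ G.prox ν μ)) : common G μ ν = ∅ := by
  rw [Finset.eq_empty_iff_forall_notMem]
  intro ρ hρ
  simp only [common, Finset.mem_filter] at hρ
  exact h (G.prox_pair hρ.2.1 hρ.2.2 hne).1

lemma M_offdiag {μ ν : Fin G.N} (hne : μ ≠ ν) :
    M G μ ν = (if G.prox μ ν ∨ G.prox ν μ then -1 else 0) + (common G μ ν).card := by
  rw [M_apply]
  have hterm : ∀ ρ, G.P ρ μ * G.P ρ ν =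
      (if ρ = μ then (if G.prox μ ν then (-1 : ℚ) else 0) else 0)
      + (if ρ = ν then (if G.prox ν μ then (-1 : ℚ) else 0) else 0)
      + (if (G.prox ρ μ ∧ G.prox ρ ν) then 1 else 0) := by
    intro ρ
    rcases eq_or_ne ρ μ with rfl | hρμ
    · simp [DualGraph.P, hne, hne.symm, prox_irrefl]
    · rcases eq_or_ne ρ ν with rfl | hρν
      · simp [DualGraph.P, hne.symm, hρμ, prox_irrefl]
      · by_cases h1 : G.prox ρ μ <;> by_cases h2 : G.prox ρ ν <;>
          simp [DualGraph.P, hρμ, hρν, h1, h2]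
  rw [Finset.sum_congr rfl (fun ρ _ => hterm ρ), Finset.sum_add_distrib,
    Finset.sum_add_distrib, Finset.sum_ite_eq' Finset.univ μ, Finset.sum_ite_eq' Finset.univ ν,
    Finset.sum_boole]
  simp only [Finset.mem_univ, if_true]
  have hcommon : Finset.univ.filter (fun ρ => G.prox ρ μ ∧ G.prox ρ ν) = common G μ ν := rfl
  rw [hcommon]
  by_cases h1 : G.prox μ ν <;> by_cases h2 : G.prox ν μ
  · exact absurd h2 (prox_antisymm G h1)
  · simp [h1, h2]
  · simp [h1, h2]
  · have := common_empty_of_not_prox G hne (by tauto)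
    simp [h1, h2, this]

lemma M_symm (μ ν : Fin G.N) : M G μ ν = M G ν μ := by
  rw [M_apply, M_apply]; exact Finset.sum_congr rfl fun ρ _ => mul_comm _ _

lemma M_diag (μ : Fin G.N) :
    M G μ μ = 1 + (Finset.univ.filter (fun ρ => G.prox ρ μ)).card := by
  rw [M_apply]
  have hterm : ∀ ρ, G.P ρ μ * G.P ρ μ =
      (if ρ = μ then 1 else 0) + (if G.prox ρ μ then 1 else 0) := by
    intro ρ
    rcases eq_or_ne ρ μ with rfl | hne
    · simp [DualGraph.P, prox_irrefl]
    · by_cases hp : G.prox ρ μ <;> simp [DualGraph.P, hne, hp]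
  rw [Finset.sum_congr rfl (fun ρ _ => hterm ρ), Finset.sum_add_distrib]
  rw [Finset.sum_ite_eq' Finset.univ μ (fun _ => (1 : ℚ))]
  simp [Finset.sum_boole]

lemma M_values {μ ν : Fin G.N} (hne : μ ≠ ν) : M G μ ν = -1 ∨ M G μ ν = 0 := by
  rw [M_offdiag G hne]
  by_cases hor : G.prox μ ν ∨ G.prox ν μ
  · rcases Nat.le_one_iff_eq_zero_or_eq_one.mp (common_card_le G hne) with h | h <;>
      simp [hor, h]
  · rw [common_empty_of_not_prox G hne hor]
    simp [hor]

lemma adj_iff {μ ν : Fin G.N} :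
    G.adj μ ν ↔ μ ≠ ν ∧ (G.prox μ ν ∨ G.prox ν μ) ∧ common G μ ν = ∅ := by
  constructor
  · rintro ⟨hne, hM⟩
    refine ⟨hne, ?_, ?_⟩
    · by_contra hor
      have h0 : M G μ ν = 0 := by
        rw [M_offdiag G hne, common_empty_of_not_prox G hne hor]; simp [hor]
      rw [M] at h0; rw [h0] at hM; norm_num at hM
    · by_contra hcom
      have hor : G.prox μ ν ∨ G.prox ν μ := by
        by_contra hor
        exact hcom (common_empty_of_not_prox G hne hor)
      have hcard : (common G μ ν).card = 1 := by
        rcases Nat.le_one_iff_eq_zero_or_eq_one.mp (common_card_le G hne) with h | h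
        · exact absurd (Finset.card_eq_zero.mp h) hcom
        · exact h
      have h0 : M G μ ν = 0 := by rw [M_offdiag G hne, hcard]; simp [hor]
      rw [M] at h0; rw [h0] at hM; norm_num at hM
  · rintro ⟨hne, hor, hcom⟩
    refine ⟨hne, ?_⟩
    have : M G μ ν = -1 := by rw [M_offdiag G hne, hcom]; simp [hor]
    rw [M] at this; exact this

lemma M_neg_one_of_adj {μ ν : Fin G.N} (h : G.adj μ ν) : M G μ ν = -1 := h.2

lemma M_eq_zero_of_not_adj {μ ν : Fin G.N} (hne : μ ≠ ν) (h : ¬ G.adj μ ν) : M G μ ν = 0 := by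
  rcases M_values G hne with hM | hM
  · exact absurd ⟨hne, hM⟩ h
  · exact hM


/-! ### The graph evolving in time, connectivity and acyclicity -/

/-- The dual graph after the first `t` blow-ups. -/
def HG (t : ℕ) : SimpleGraph (Fin G.N) where
  Adj u v := u ≠ v ∧ (u : ℕ) < t ∧ (v : ℕ) < t ∧ (G.prox u v ∨ G.prox v u) ∧
    ∀ ρ : Fin G.N, (ρ : ℕ) < t → ¬(G.prox ρ u ∧ G.prox ρ v)
  symm := by
    constructor
    rintro u v ⟨h1, h2, h3, h4, h5⟩
    exact ⟨h1.symm, h3, h2, h4.symm, fun ρ hρ hb => h5 ρ hρ ⟨hb.2, hb.1⟩⟩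
  loopless := ⟨fun u h => h.1 rfl⟩

lemma HG_mono_adj {t : ℕ} {u v : Fin G.N} (h : (HG G (t+1)).Adj u v)
    (hu : (u : ℕ) < t) (hv : (v : ℕ) < t) : (HG G t).Adj u v := by
  obtain ⟨h1, _, _, h4, h5⟩ := h
  exact ⟨h1, hu, hv, h4, fun ρ hρ => h5 ρ (by omega)⟩

lemma HG_new_adj {t : ℕ} {w u : Fin G.N} (hw : (w : ℕ) = t) (hu : (u : ℕ) < t + 1)
    (hprox : G.prox w u) : (HG G (t+1)).Adj w u := by
  have hlt := G.prox_lt hprox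
  refine ⟨fun h => by subst h; exact absurd hlt (lt_irrefl _), by omega, hu, Or.inl hprox, ?_⟩
  intro ρ hρ ⟨hρw, _⟩
  have := G.prox_lt hρw
  omega

lemma HG_edge_lift {t : ℕ} {u v : Fin G.N} (h : (HG G t).Adj u v) :
    (HG G (t+1)).Reachable u v := by
  by_cases hkill : ∃ ρ : Fin G.N, (ρ : ℕ) = t ∧ G.prox ρ u ∧ G.prox ρ v
  · obtain ⟨ρ, hρt, h1, h2⟩ := hkill
    obtain ⟨hne, hu, hv, hor, hcond⟩ := h
    have e1 : (HG G (t+1)).Adj ρ u := HG_new_adj G hρt (by omega) h1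
    have e2 : (HG G (t+1)).Adj ρ v := HG_new_adj G hρt (by omega) h2
    exact (e1.symm.reachable).trans e2.reachable
  · obtain ⟨hne, hu, hv, hor, hcond⟩ := h
    refine SimpleGraph.Adj.reachable ⟨hne, by omega, by omega, hor, ?_⟩
    intro ρ hρ hb
    rcases Nat.lt_succ_iff_lt_or_eq.mp hρ with h' | h'
    · exact hcond ρ h' hb
    · exact hkill ⟨ρ, h', hb.1, hb.2⟩

lemma HG_walk_lift {t : ℕ} {u v : Fin G.N} (p : (HG G t).Walk u v) :
    (HG G (t+1)).Reachable u v := by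
  induction p with
  | nil => exact SimpleGraph.Reachable.refl _
  | cons h _ ih => exact (HG_edge_lift G h).trans ih

lemma HG_connected : ∀ (t : ℕ) (u v : Fin G.N), (u : ℕ) < t → (v : ℕ) < t →
    (HG G t).Reachable u v := by
  intro t
  induction t with
  | zero => intro u v hu _; omega
  | succ t ih =>
    -- first connect any vertex `< t+1` to a vertex `< t` (or conclude directly)
    have hstep : ∀ u : Fin G.N, (u : ℕ) < t + 1 → (u : ℕ) = t → 0 < t →
        ∃ u' : Fin G.N, (u' : ℕ) < t ∧ (HG G (t+1)).Reachable u u' := by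
      intro u hu hut ht
      obtain ⟨ν, hν⟩ := G.prox_nonempty u (by omega)
      have hlt := G.prox_lt hν
      exact ⟨ν, by omega, (HG_new_adj G hut (by omega) hν).reachable⟩
    intro u v hu hv
    rcases Nat.eq_zero_or_pos t with rfl | ht
    · have : u = v := Fin.ext (by omega)
      rw [this]
    · have hgetu : ∃ u' : Fin G.N, (u' : ℕ) < t ∧ (HG G (t+1)).Reachable u u' := by
        rcases Nat.lt_succ_iff_lt_or_eq.mp hu with h' | h'
        · exact ⟨u, h', SimpleGraph.Reachable.refl _⟩
        · exact hstep u hu h' ht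
      have hgetv : ∃ v' : Fin G.N, (v' : ℕ) < t ∧ (HG G (t+1)).Reachable v v' := by
        rcases Nat.lt_succ_iff_lt_or_eq.mp hv with h' | h'
        · exact ⟨v, h', SimpleGraph.Reachable.refl _⟩
        · exact hstep v hv h' ht
      obtain ⟨u', hu', hru⟩ := hgetu
      obtain ⟨v', hv', hrv⟩ := hgetv
      obtain ⟨p⟩ := ih u' v' hu' hv'
      exact (hru.trans (HG_walk_lift G p)).trans hrv.symm

lemma HG_acyclic : ∀ t : ℕ, (HG G t).IsAcyclic := by
  intro t
  induction t with
  | zero =>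
    intro v c hc
    cases c with
    | nil => exact hc.ne_nil rfl
    | cons h q => exact absurd h.2.1 (by omega)
  | succ t ih =>
    intro v c hc
    by_cases hvert : ∃ w ∈ c.support, (w : ℕ) = t
    · obtain ⟨w, hw, hwt⟩ := hvert
      have hc' := hc.rotate hw
      revert hc'
      generalize c.rotate w hw = c'
      intro hc'
      cases c' with
      | nil => exact hc'.ne_nil rfl
      | @cons _ a _ ha q =>
        rw [SimpleGraph.Walk.cons_isCycle_iff] at hc'
        obtain ⟨hqpath, hedge⟩ := hc'
        have hwa : w ≠ a := ha.ne
        obtain ⟨b, hb, r, hrev⟩ := SimpleGraph.Walk.exists_eq_cons_of_ne hwa q.reverse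
        have hrevpath : q.reverse.IsPath := hqpath.reverse
        have hrpath : r.IsPath := by
          rw [hrev] at hrevpath; exact hrevpath.of_cons
        have hwnr : w ∉ r.support := by
          have hnd := hrevpath.support_nodup
          rw [hrev, SimpleGraph.Walk.support_cons] at hnd
          exact (List.nodup_cons.mp hnd).1
        have hab : a ≠ b := by
          intro h
          subst h
          apply hedge
          have : s(w, a) ∈ q.reverse.edges := by
            rw [hrev, SimpleGraph.Walk.edges_cons]; exact List.mem_cons_self
          rwa [SimpleGraph.Walk.edges_reverse, List.mem_reverse] at this
        have halt : (a : ℕ) < t := by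
          have h1 : (a : ℕ) < t + 1 := ha.2.2.1
          have h2 : (a : ℕ) ≠ t := fun h => hwa (Fin.ext (by omega)).symm
          omega
        have hblt : (b : ℕ) < t := by
          have h1 : (b : ℕ) < t + 1 := hb.2.2.1
          have h2 : (b : ℕ) ≠ t := fun h => (hb.1 : w ≠ b) (Fin.ext (by omega))
          omega
        have hpwa : G.prox w a := by
          rcases ha.2.2.2.1 with h | h
          · exact h
          · have := G.prox_lt h; omega
        have hpwb : G.prox w b := by
          rcases hb.2.2.2.1 with h | h
          · exact h
          · have := G.prox_lt h; omega
        have hpp := G.prox_pair hpwa hpwb hab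
        have hadj_ab : (HG G t).Adj a b := by
          refine ⟨hab, halt, hblt, hpp.1, ?_⟩
          intro ρ hρ
          exact hpp.2 ρ (by rw [Fin.lt_def]; omega)
        have h_e : ∀ e ∈ r.edges, e ∈ (HG G t).edgeSet := by
          intro e he
          induction e using Sym2.ind with
          | _ x y =>
            have hadj := r.adj_of_mem_edges he
            have hx : x ∈ r.support := r.fst_mem_support_of_mem_edges he
            have hy : y ∈ r.support := r.snd_mem_support_of_mem_edges he
            have hxlt : (x : ℕ) < t := by
              have h1 : (x : ℕ) < t + 1 := hadj.2.1
              have h2 : (x : ℕ) ≠ t := fun h => hwnr (by rwa [show x = w from Fin.ext (by omega)] at hx)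
              omega
            have hylt : (y : ℕ) < t := by
              have h1 : (y : ℕ) < t + 1 := hadj.2.2.1
              have h2 : (y : ℕ) ≠ t := fun h => hwnr (by rwa [show y = w from Fin.ext (by omega)] at hy)
              omega
            exact HG_mono_adj G hadj hxlt hylt
        have hcyc : (SimpleGraph.Walk.cons hadj_ab (r.transfer (HG G t) h_e)).IsCycle := by
          rw [SimpleGraph.Walk.cons_isCycle_iff]
          refine ⟨hrpath.transfer h_e, ?_⟩
          rw [SimpleGraph.Walk.edges_transfer]
          intro hmem
          have hadj := r.adj_of_mem_edges hmem
          exact hadj.2.2.2.2 w (by omega) ⟨hpwa, hpwb⟩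
        exact ih (SimpleGraph.Walk.cons hadj_ab (r.transfer (HG G t) h_e)) hcyc
    · push_neg at hvert
      have h_e : ∀ e ∈ c.edges, e ∈ (HG G t).edgeSet := by
        intro e he
        induction e using Sym2.ind with
        | _ x y =>
          have hadj := c.adj_of_mem_edges he
          have hx : x ∈ c.support := c.fst_mem_support_of_mem_edges he
          have hy : y ∈ c.support := c.snd_mem_support_of_mem_edges he
          have hxlt : (x : ℕ) < t := by
            have h1 : (x : ℕ) < t + 1 := hadj.2.1
            have h2 := hvert x hx
            omega
          have hylt : (y : ℕ) < t := by
            have h1 : (y : ℕ) < t + 1 := hadj.2.2.1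
            have h2 := hvert y hy
            omega
          exact HG_mono_adj G hadj hxlt hylt
      exact ih (c.transfer (HG G t) h_e) (hc.transfer h_e)

/-- The final graph coincides with the abstract dual graph. -/
lemma graph_eq_HG : G.graph = HG G G.N := by
  ext u v
  constructor
  · intro h
    obtain ⟨hne, hor, hcom⟩ := adj_iff G |>.mp h
    refine ⟨hne, u.isLt, v.isLt, hor, ?_⟩
    intro ρ _ hb
    have : ρ ∈ common G u v := by simp [common, hb.1, hb.2]
    rw [hcom] at this
    exact absurd this (Finset.notMem_empty ρ)
  · rintro ⟨hne, _, _, hor, hcond⟩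
    apply (adj_iff G).mpr
    refine ⟨hne, hor, ?_⟩
    rw [Finset.eq_empty_iff_forall_notMem]
    intro ρ hρ
    simp only [common, Finset.mem_filter] at hρ
    exact hcond ρ ρ.isLt ⟨hρ.2.1, hρ.2.2⟩

lemma graph_connected : G.graph.Connected := by
  rw [graph_eq_HG]
  have : Nonempty (Fin G.N) := ⟨G.root⟩
  refine SimpleGraph.Connected.mk ?_
  intro u v
  exact HG_connected G G.N u v u.isLt v.isLt

lemma graph_isTree : G.graph.IsTree := by
  constructor
  · exact graph_connected G
  · rw [graph_eq_HG]; exact HG_acyclic G G.N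


/-! ### Metric and path-set lemmas -/

lemma mem_pathSet_iff {u v x : Fin G.N} :
    x ∈ G.pathSet u v ↔ G.dist u x + G.dist x v = G.dist u v := by
  simp [DualGraph.pathSet]

lemma dist_tri (u v w : Fin G.N) : G.dist u w ≤ G.dist u v + G.dist v w :=
  (graph_connected G).dist_triangle

lemma dist_comm' (u v : Fin G.N) : G.dist u v = G.dist v u := SimpleGraph.dist_comm

lemma dist_self' (u : Fin G.N) : G.dist u u = 0 := SimpleGraph.dist_self

lemma eq_of_dist_eq_zero {u v : Fin G.N} (h : G.dist u v = 0) : u = v :=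
  ((graph_connected G).dist_eq_zero_iff).1 h

lemma left_mem_pathSet (u v : Fin G.N) : u ∈ G.pathSet u v := by
  rw [mem_pathSet_iff, dist_self']
  omega

lemma right_mem_pathSet (u v : Fin G.N) : v ∈ G.pathSet u v := by
  rw [mem_pathSet_iff, dist_self']
  omega

lemma pathSet_symm {u v x : Fin G.N} (h : x ∈ G.pathSet u v) : x ∈ G.pathSet v u := by
  rw [mem_pathSet_iff] at h ⊢
  rw [dist_comm' G v x, dist_comm' G x u, dist_comm' G v u]
  omega

lemma exists_geodesic (u v : Fin G.N) :
    ∃ p : G.graph.Walk u v, p.IsPath ∧ p.length = G.dist u v :=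
  (graph_connected G).exists_path_of_dist u v

lemma dist_le'' {u v : Fin G.N} (p : G.graph.Walk u v) : G.dist u v ≤ p.length :=
  SimpleGraph.dist_le p

/-- Splitting a geodesic walk at a vertex on it. -/
lemma geodesic_split {u v y : Fin G.N} (p : G.graph.Walk u v)
    (hlen : p.length = G.dist u v) (hy : y ∈ p.support) :
    G.dist u y + G.dist y v = G.dist u v := by
  have hsplit := congrArg SimpleGraph.Walk.length (p.take_spec hy)
  rw [SimpleGraph.Walk.length_append] at hsplit
  have h1 : G.dist u y ≤ (p.takeUntil y hy).length := dist_le'' G _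
  have h2 : G.dist y v ≤ (p.dropUntil y hy).length := dist_le'' G _
  have h3 : G.dist u v ≤ G.dist u y + G.dist y v := dist_tri G u y v
  omega

lemma append_isPath {u v w : Fin G.N} {p : G.graph.Walk u v} {q : G.graph.Walk v w}
    (hp : p.IsPath) (hq : q.IsPath)
    (hsep : ∀ y, y ∈ p.support → y ∈ q.support → y = v) : (p.append q).IsPath := by
  rw [SimpleGraph.Walk.isPath_def, SimpleGraph.Walk.support_append]
  apply List.Nodup.append hp.support_nodup (hq.support_nodup.tail)
  intro a hap haq
  have haq' : a ∈ q.support := List.mem_of_mem_tail haq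
  have hav : a = v := hsep a hap haq'
  subst hav
  have := hq.support_nodup
  rw [q.support_eq_cons] at this
  exact (List.nodup_cons.mp this).1 haq

/-- Every walk between `u` and `v` passes through every vertex of `[u,v]`. -/
lemma separation {u v z : Fin G.N} (hz : z ∈ G.pathSet u v) (w : G.graph.Walk u v) :
    z ∈ w.support := by
  rw [mem_pathSet_iff] at hz
  obtain ⟨p1, hp1, hl1⟩ := exists_geodesic G u z
  obtain ⟨p2, hp2, hl2⟩ := exists_geodesic G z v
  have hsep : ∀ y, y ∈ p1.support → y ∈ p2.support → y = z := by
    intro y hy1 hy2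
    have e1 := geodesic_split G p1 hl1 hy1
    have e2 := geodesic_split G p2 hl2 hy2
    have e3 := dist_tri G u y v
    have e4 := dist_comm' G z y
    have : G.dist y z = 0 := by omega
    exact eq_of_dist_eq_zero G this
  have happ : (p1.append p2).IsPath := append_isPath G hp1 hp2 hsep
  have huniq := (graph_isTree G).IsAcyclic.path_unique
    ⟨w.bypass, w.bypass_isPath⟩ ⟨p1.append p2, happ⟩
  have hcoe : w.bypass = p1.append p2 := congrArg Subtype.val huniq
  have hzmem : z ∈ (p1.append p2).support := by
    rw [SimpleGraph.Walk.mem_support_append_iff]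
    exact Or.inl p1.end_mem_support
  rw [← hcoe] at hzmem
  exact w.support_bypass_subset hzmem

/-- Vertices on a geodesic are linearly ordered. -/
lemma pathSet_linear {u v x y : Fin G.N} (hx : x ∈ G.pathSet u v) (hy : y ∈ G.pathSet u v) :
    y ∈ G.pathSet u x ∨ x ∈ G.pathSet u y := by
  obtain ⟨p, hp, hl⟩ := exists_geodesic G u v
  have hys : y ∈ p.support := separation G hy p
  have hxs : x ∈ p.support := separation G hx p
  rw [mem_pathSet_iff] at hx hy
  have hsplit := congrArg SimpleGraph.Walk.length (p.take_spec hys)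
  rw [SimpleGraph.Walk.length_append] at hsplit
  have h1 : G.dist u y ≤ (p.takeUntil y hys).length := dist_le'' G _
  have h2 : G.dist y v ≤ (p.dropUntil y hys).length := dist_le'' G _
  have hq : (p.takeUntil y hys).length = G.dist u y := by omega
  have hr : (p.dropUntil y hys).length = G.dist y v := by omega
  have hxmem : x ∈ (p.takeUntil y hys).support ∨ x ∈ (p.dropUntil y hys).support := by
    have := p.take_spec hys
    rw [← this] at hxs
    rw [SimpleGraph.Walk.mem_support_append_iff] at hxs
    exact hxs
  rcases hxmem with hmem | hmem
  · right
    rw [mem_pathSet_iff]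
    exact geodesic_split G _ hq hmem
  · left
    have := geodesic_split G _ hr hmem
    rw [mem_pathSet_iff]
    have e3 := dist_tri G u x y
    have e4 := dist_comm' G y x
    omega

/-- Composition of path membership. -/
lemma pathSet_trans {u v x y : Fin G.N} (hx : x ∈ G.pathSet u v) (hy : y ∈ G.pathSet u x) :
    y ∈ G.pathSet u v := by
  rw [mem_pathSet_iff] at hx hy ⊢
  have e1 := dist_tri G y x v
  have e2 := dist_tri G u y v
  omega

/-- Existence of the median of three vertices. -/
lemma median (μ γ ν : Fin G.N) :
    ∃ m, m ∈ G.pathSet μ γ ∧ m ∈ G.pathSet μ ν ∧ m ∈ G.pathSet γ ν ∧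
      G.pathSet μ γ ∩ G.pathSet μ ν = G.pathSet μ m := by
  classical
  set S := G.pathSet μ γ ∩ G.pathSet μ ν with hS
  have hSne : S.Nonempty := ⟨μ, Finset.mem_inter.mpr ⟨left_mem_pathSet G μ γ, left_mem_pathSet G μ ν⟩⟩
  obtain ⟨m, hmS, hmax⟩ := Finset.exists_max_image S (fun x => G.dist μ x) hSne
  have hm1 : m ∈ G.pathSet μ γ := (Finset.mem_inter.mp hmS).1
  have hm2 : m ∈ G.pathSet μ ν := (Finset.mem_inter.mp hmS).2
  -- key: a point on `[m,ν]` which is also on `[μ,γ]` must be `m`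
  have hkey : ∀ y, y ∈ G.pathSet m ν → y ∈ G.pathSet μ γ → y = m := by
    intro y hy1 hy2
    have hyuv : y ∈ G.pathSet μ ν := by
      rw [mem_pathSet_iff] at hm2 hy1 ⊢
      have e1 := dist_tri G μ y ν
      have e2 := dist_tri G μ m y
      omega
    have hyS : y ∈ S := Finset.mem_inter.mpr ⟨hy2, hyuv⟩
    have hle := hmax y hyS
    rw [mem_pathSet_iff] at hm2 hy1 hyuv
    have : G.dist m y = 0 := by
      have e2 := dist_tri G μ m y
      omega
    exact (eq_of_dist_eq_zero G this).symm
  have hm3 : m ∈ G.pathSet γ ν := by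
    -- build a path γ → m → ν
    obtain ⟨p1, hp1, hl1⟩ := exists_geodesic G γ m
    obtain ⟨p2, hp2, hl2⟩ := exists_geodesic G m ν
    have hsep : ∀ y, y ∈ p1.support → y ∈ p2.support → y = m := by
      intro y hy1 hy2
      have e1 : y ∈ G.pathSet γ m := by rw [mem_pathSet_iff]; exact geodesic_split G p1 hl1 hy1
      have e2 : y ∈ G.pathSet m ν := by rw [mem_pathSet_iff]; exact geodesic_split G p2 hl2 hy2
      -- `y ∈ [γ,m] ⊆ [μ,γ]` reversed
      have e3 : y ∈ G.pathSet μ γ := by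
        rw [mem_pathSet_iff] at e1 ⊢
        rw [mem_pathSet_iff] at hm1
        have t1 := dist_tri G μ m y
        have t2 := dist_tri G μ y γ
        have c1 := dist_comm' G γ y
        have c2 := dist_comm' G m γ
        have c3 := dist_comm' G y m
        omega
      exact hkey y e2 e3
    have happ : (p1.append p2).IsPath := append_isPath G hp1 hp2 hsep
    obtain ⟨p0, hp0, hl0⟩ := exists_geodesic G γ ν
    have huniq := (graph_isTree G).IsAcyclic.path_unique ⟨p0, hp0⟩ ⟨p1.append p2, happ⟩
    have hcoe : p0 = p1.append p2 := congrArg Subtype.val huniq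
    have hlen : p0.length = p1.length + p2.length := by
      rw [hcoe, SimpleGraph.Walk.length_append]
    rw [mem_pathSet_iff]
    omega
  -- the intersection is `[μ, m]`
  refine ⟨m, hm1, hm2, hm3, ?_⟩
  apply Finset.ext
  intro y
  constructor
  · intro hyS
    obtain ⟨hy1, hy2⟩ := Finset.mem_inter.mp hyS
    rcases pathSet_linear G hy2 hm2 with h | h
    · -- m ∈ [μ, y] : then dist μ m ≤ dist μ y ≤ dist μ m so y = m
      have hle := hmax y hyS
      rw [mem_pathSet_iff] at h
      have h0 : G.dist m y = 0 := by omega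
      have hym : m = y := eq_of_dist_eq_zero G h0
      rw [← hym]
      exact right_mem_pathSet G μ m
    · exact h
  · intro hy
    refine Finset.mem_inter.mpr ⟨pathSet_trans G hm1 hy, pathSet_trans G hm2 hy⟩


/-! ### The product formula and the adjacent-pair identity -/

lemma mulVec_apply' (A : Matrix (Fin G.N) (Fin G.N) ℚ) (x : Fin G.N → ℚ) (i : Fin G.N) :
    A.mulVec x i = ∑ j, A i j * x j := rfl

lemma MV_sum (i k : Fin G.N) : ∑ j, M G i j * G.V j k = if i = k then 1 else 0 := by
  have := congrFun (congrFun (MV G) i) k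
  rw [Matrix.mul_apply] at this
  rw [this, Matrix.one_apply]

/-- The connected component of `c` in the graph with `z` removed. -/
def comp (c z : Fin G.N) : Set (Fin G.N) := {x | ∃ w : G.graph.Walk c x, z ∉ w.support}

lemma comp_self {c z : Fin G.N} (h : c ≠ z) : c ∈ comp G c z :=
  ⟨SimpleGraph.Walk.nil, by simp [Ne.symm h]⟩

lemma comp_not_z (c z : Fin G.N) : z ∉ comp G c z := by
  rintro ⟨w, hw⟩
  exact hw w.end_mem_support

lemma comp_ne_z {c z i : Fin G.N} (h : i ∈ comp G c z) : i ≠ z := by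
  rintro rfl
  exact comp_not_z G c i h

lemma comp_closed {c z i j : Fin G.N} (hi : i ∈ comp G c z) (hadj : G.graph.Adj i j)
    (hj : j ≠ z) : j ∈ comp G c z := by
  obtain ⟨w, hw⟩ := hi
  refine ⟨w.concat hadj, ?_⟩
  rw [SimpleGraph.Walk.support_concat]
  intro hmem
  rw [List.mem_append] at hmem
  rcases hmem with h | h
  · exact hw h
  · simp at h
    exact hj h.symm

lemma comp_avoid {c z v : Fin G.N} (hz : z ∈ G.pathSet c v) : v ∉ comp G c z := by
  rintro ⟨w, hw⟩
  exact hw (separation G hz w)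

lemma M_zero_of_comp {c z i j : Fin G.N} (hi : i ∈ comp G c z) (hj : j ∉ comp G c z)
    (hjz : j ≠ z) : M G i j = 0 := by
  have hij : i ≠ j := fun h => hj (h ▸ hi)
  rcases M_values G hij with hM | hM
  · exact absurd (comp_closed G hi (show G.graph.Adj i j from ⟨hij, hM⟩) hjz) hj
  · exact hM

/-- The product formula: for `z` on the path `[μ,ν]`,
`V_{zz} V_{μν} = V_{μz} V_{zν}`. -/
lemma prodV {z μ ν : Fin G.N} (hz : z ∈ G.pathSet μ ν) :
    G.V z z * G.V μ ν = G.V μ z * G.V z ν := by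
  rcases eq_or_ne z μ with rfl | hzμ
  · ring
  · rcases eq_or_ne z ν with rfl | hzν
    · ring
    · set A := comp G μ z with hA
      set full : Fin G.N → ℚ := fun j => G.V z z * G.V j ν - G.V z ν * G.V j z with hfull
      set x : Fin G.N → ℚ := fun j => if j ∈ A then full j else 0 with hx
      have hμA : μ ∈ A := comp_self G (Ne.symm hzμ)
      have hνA : ν ∉ A := comp_avoid G hz
      have hzero : x = 0 := by
        apply CLcore G (A := A)
        · intro i hi; simp [hx, hi]
        · intro i hi
          have hiν : i ≠ ν := fun h => hνA (h ▸ hi)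
          have hiz : i ≠ z := comp_ne_z G hi
          rw [mulVec_apply' G]
          have hpt : ∀ j, M G i j * x j = M G i j * full j := by
            intro j
            by_cases hj : j ∈ A
            · simp [hx, hj]
            · rcases eq_or_ne j z with rfl | hjz
              · have : full j = 0 := by simp [hfull]; ring
                simp [hx, hj, this]
              · have : M G i j = 0 := M_zero_of_comp G hi hj hjz
                simp [hx, hj, this]
          rw [Finset.sum_congr rfl (fun j _ => hpt j)]
          have hexp : ∀ j, M G i j * full j =
              G.V z z * (M G i j * G.V j ν) - G.V z ν * (M G i j * G.V j z) := by
            intro j; simp [hfull]; ring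
          rw [Finset.sum_congr rfl (fun j _ => hexp j), Finset.sum_sub_distrib,
            ← Finset.mul_sum, ← Finset.mul_sum, MV_sum, MV_sum]
          simp [hiν, hiz]
      have := congrFun hzero μ
      simp only [hx, hμA, if_pos] at this
      have h0 : full μ = 0 := this
      have h1 : G.V z z * G.V μ ν - G.V z ν * G.V μ z = 0 := h0
      linarith [h1]

/-- For adjacent `μ ∼ γ`: `(1 + V_{μγ}) V_{γμ} = V_{μμ} V_{γγ}`. -/
lemma adj_identity {μ γ : Fin G.N} (h : G.adj μ γ) :
    (1 + G.V μ γ) * G.V γ μ = G.V μ μ * G.V γ γ := by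
  have hne : μ ≠ γ := h.1
  have hadjG : G.graph.Adj μ γ := h
  set A := comp G γ μ with hA
  have hγA : γ ∈ A := comp_self G (Ne.symm hne)
  have hμA : μ ∉ A := comp_not_z G γ μ
  -- the only vertex of `A` adjacent to `μ` is `γ`
  have hMcol : ∀ i ∈ A, M G i μ = if i = γ then -1 else 0 := by
    intro i hi
    have hiμ : i ≠ μ := comp_ne_z G hi
    rcases eq_or_ne i γ with rfl | hiγ
    · rw [if_pos rfl, M_symm]; exact h.2
    · rw [if_neg hiγ]
      rcases M_values G hiμ with hM | hM
      · exfalso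
        have hadj_iμ : G.graph.Adj i μ := ⟨hiμ, hM⟩
        -- show `μ ∈ [γ, i]`, contradicting `i ∈ A`
        have hd2 : G.dist γ i ≤ 2 := by
          have : (SimpleGraph.Walk.cons hadjG.symm
            (SimpleGraph.Walk.cons hadj_iμ.symm SimpleGraph.Walk.nil) : G.graph.Walk γ i).length = 2 := rfl
          calc G.dist γ i ≤ _ := dist_le'' G _
            _ = 2 := this
        have hγi : γ ≠ i := Ne.symm hiγ
        have hd0 : G.dist γ i ≠ 0 := fun h0 => hγi (eq_of_dist_eq_zero G h0)
        have hd1 : G.dist γ i ≠ 1 := by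
          intro h1
          have hadj_γi : G.graph.Adj γ i := by
            have : G.graph.dist γ i = 1 := h1
            exact SimpleGraph.dist_eq_one_iff_adj.mp this
          have hp1 : (SimpleGraph.Walk.cons hadj_γi SimpleGraph.Walk.nil : G.graph.Walk γ i).IsPath := by
            simp [SimpleGraph.Walk.cons_isPath_iff, hadj_γi.ne]
          have hp2 : (SimpleGraph.Walk.cons hadjG.symm
              (SimpleGraph.Walk.cons hadj_iμ.symm SimpleGraph.Walk.nil) : G.graph.Walk γ i).IsPath := by
            simp [SimpleGraph.Walk.cons_isPath_iff, hne, hγi, hiμ.symm, Ne.symm hne]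
          have huniq := (graph_isTree G).IsAcyclic.path_unique ⟨_, hp1⟩ ⟨_, hp2⟩
          have h12 := congrArg Subtype.val huniq
          have := congrArg SimpleGraph.Walk.length h12
          simp at this
        have hdγμ : G.dist γ μ = 1 := SimpleGraph.dist_eq_one_iff_adj.mpr hadjG.symm
        have hdμi : G.dist μ i = 1 := SimpleGraph.dist_eq_one_iff_adj.mpr hadj_iμ.symm
        have hμpath : μ ∈ G.pathSet γ i := by
          rw [mem_pathSet_iff, hdγμ, hdμi]
          omega
        obtain ⟨w, hw⟩ := hi
        exact hw (separation G hμpath w)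
      · exact hM
  set full : Fin G.N → ℚ := fun j => (1 + G.V μ γ) * G.V j μ - G.V μ μ * G.V j γ with hfull
  set x : Fin G.N → ℚ := fun j => if j ∈ A then full j else 0 with hx
  have hzero : x = 0 := by
    apply CLcore G (A := A)
    · intro i hi; simp [hx, hi]
    · intro i hi
      have hiμ : i ≠ μ := comp_ne_z G hi
      rw [mulVec_apply' G]
      have hpt : ∀ j, M G i j * x j =
          M G i j * full j - (if j = μ then M G i μ * full μ else 0) := by
        intro j
        by_cases hj : j ∈ A
        · have hjμ : j ≠ μ := comp_ne_z G hj
          simp [hx, hj, hjμ]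
        · rcases eq_or_ne j μ with rfl | hjμ
          · simp [hx, hj]
          · have : M G i j = 0 := M_zero_of_comp G hi hj hjμ
            simp [hx, hj, hjμ, this]
      rw [Finset.sum_congr rfl (fun j _ => hpt j), Finset.sum_sub_distrib,
        Finset.sum_ite_eq' Finset.univ μ (fun _ => M G i μ * full μ)]
      have hexp : ∀ j, M G i j * full j =
          (1 + G.V μ γ) * (M G i j * G.V j μ) - G.V μ μ * (M G i j * G.V j γ) := by
        intro j; simp [hfull]; ring
      rw [Finset.sum_congr rfl (fun j _ => hexp j), Finset.sum_sub_distrib,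
        ← Finset.mul_sum, ← Finset.mul_sum, MV_sum, MV_sum]
      rw [hMcol i hi]
      have hfμ : full μ = G.V μ μ := by
        simp only [hfull]
        ring
      rw [hfμ]
      by_cases hiγ : i = γ <;> simp [hiμ, hiγ, hne, Ne.symm hne] <;> ring
  have := congrFun hzero γ
  simp only [hx, hγA, if_pos] at this
  have h1 : (1 + G.V μ γ) * G.V γ μ - G.V μ μ * G.V γ γ = 0 := this
  linarith [h1]


/-! ### Comparison lemmas for `ρ` and assembly -/

lemma rho_eq (μ γ ν : Fin G.N) : G.rho μ γ ν = G.V γ ν / G.V μ ν := rfl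

/-- `ρ` only depends on the median. -/
lemma rho_median {μ γ ν m : Fin G.N} (h1 : m ∈ G.pathSet μ ν) (h2 : m ∈ G.pathSet γ ν) :
    G.rho μ γ ν = G.rho μ γ m := by
  have p1 := prodV G h2  -- V m m * V γ ν = V γ m * V m ν
  have p2 := prodV G h1  -- V m m * V μ ν = V μ m * V m ν
  rw [rho_eq, rho_eq]
  rw [div_eq_div_iff (ne_of_gt (V_pos G μ ν)) (ne_of_gt (V_pos G μ m))]
  have hmm := V_pos G m m
  have hmν := V_pos G m ν
  -- cross multiplied: V γ ν * V μ m = V γ m * V μ ν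
  have key : G.V m m * (G.V γ ν * G.V μ m) = G.V m m * (G.V γ m * G.V μ ν) := by
    linear_combination G.V μ m * p1 - G.V γ m * p2
  have := mul_left_cancel₀ (ne_of_gt hmm) key
  linarith [this]

lemma Rcore {μ γ a b : Fin G.N} (ha : a ∈ G.pathSet μ γ) (hb : b ∈ G.pathSet μ γ)
    (hab : a ∈ G.pathSet μ b) (hne : a ≠ b) :
    G.rho μ γ a < G.rho μ γ b ∧ G.dist μ a < G.dist μ b := by
  have hbaγ : b ∈ G.pathSet a γ := by
    rw [mem_pathSet_iff] at ha hb hab ⊢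
    have t := dist_tri G a b γ
    omega
  refine ⟨?_, ?_⟩
  · have p1 := prodV G hbaγ  -- V b b * V a γ = V a b * V b γ
    have p2 := prodV G hab   -- V a a * V μ b = V μ a * V a b
    have h1 := V_pos G μ a
    have h2 := V_pos G μ b
    have haa := V_pos G a a
    have hbb := V_pos G b b
    have hbγ := V_pos G b γ
    have hμa := V_pos G μ a
    rw [rho_eq, rho_eq, div_lt_div_iff₀ h1 h2]
    rw [V_symm G γ a, V_symm G γ b]
    -- goal : V a γ * V μ b < V b γ * V μ a
    have hcs := CS_strict G hne
    have hdpos : 0 < G.V b γ * G.V μ a := mul_pos hbγ hμa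
    have key := mul_lt_mul_of_pos_right hcs hdpos
    have e : (G.V a a * G.V b b) * (G.V a γ * G.V μ b)
        = (G.V a b * G.V a b) * (G.V b γ * G.V μ a) := by
      linear_combination (G.V a a * G.V μ b) * p1 + (G.V a b * G.V b γ) * p2
    have hfin : (G.V a a * G.V b b) * (G.V a γ * G.V μ b)
        < (G.V a a * G.V b b) * (G.V b γ * G.V μ a) := by
      calc (G.V a a * G.V b b) * (G.V a γ * G.V μ b)
          = (G.V a b * G.V a b) * (G.V b γ * G.V μ a) := e
        _ < (G.V a a * G.V b b) * (G.V b γ * G.V μ a) := key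
    exact lt_of_mul_lt_mul_left hfin (le_of_lt (mul_pos haa hbb))
  · rw [mem_pathSet_iff] at hab
    have hne' : G.dist a b ≠ 0 := fun h0 => hne (eq_of_dist_eq_zero G h0)
    omega

lemma rho_lt_iff_dist {μ γ a b : Fin G.N} (ha : a ∈ G.pathSet μ γ) (hb : b ∈ G.pathSet μ γ) :
    G.rho μ γ a < G.rho μ γ b ↔ G.dist μ a < G.dist μ b := by
  rcases eq_or_ne a b with rfl | hne
  · simp
  · rcases pathSet_linear G ha hb with h | h
    · -- b ∈ [μ, a]
      obtain ⟨hr, hd⟩ := Rcore G hb ha h (Ne.symm hne)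
      constructor
      · intro hlt; exact absurd hlt (not_lt.2 (le_of_lt hr))
      · intro hlt; exact absurd hlt (not_lt.2 (le_of_lt hd))
    · obtain ⟨hr, hd⟩ := Rcore G ha hb h hne
      exact iff_of_true hr hd

lemma subset_iff_dist {μ γ a b : Fin G.N} (ha : a ∈ G.pathSet μ γ) (hb : b ∈ G.pathSet μ γ) :
    G.pathSet μ a ⊂ G.pathSet μ b ↔ G.dist μ a < G.dist μ b := by
  rcases eq_or_ne a b with rfl | hne
  · exact iff_of_false (ssubset_irrefl _) (lt_irrefl _)
  · have haux : ∀ x y : Fin G.N, x ∈ G.pathSet μ y → x ≠ y →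
        G.pathSet μ x ⊂ G.pathSet μ y ∧ G.dist μ x < G.dist μ y := by
      intro x y hxy hnexy
      constructor
      · rw [Finset.ssubset_def]
        constructor
        · intro w hw
          exact pathSet_trans G hxy hw
        · intro hcon
          have hy : y ∈ G.pathSet μ x := hcon (right_mem_pathSet G μ y)
          rw [mem_pathSet_iff] at hy hxy
          have hd : G.dist x y = 0 := by
            have c := dist_comm' G y x
            omega
          exact hnexy (eq_of_dist_eq_zero G hd)
      · rw [mem_pathSet_iff] at hxy
        have hne' : G.dist x y ≠ 0 := fun h0 => hnexy (eq_of_dist_eq_zero G h0)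
        omega
    rcases pathSet_linear G ha hb with h | h
    · -- b ∈ [μ, a]
      obtain ⟨hs, hd⟩ := haux b a h (Ne.symm hne)
      constructor
      · intro hlt
        exact absurd (ssubset_trans hlt hs) (ssubset_irrefl _)
      · intro hlt; exact absurd hlt (not_lt.2 (le_of_lt hd))
    · obtain ⟨hs, hd⟩ := haux a b h hne
      exact iff_of_true hs hd

lemma main_part1 (μ γ ν₁ ν₂ : Fin G.N) :
    G.rho μ γ ν₁ < G.rho μ γ ν₂ ↔
      G.pathSet μ ν₁ ∩ G.pathSet μ γ ⊂ G.pathSet μ ν₂ ∩ G.pathSet μ γ := by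
  obtain ⟨m₁, h11, h12, h13, h14⟩ := median G μ γ ν₁
  obtain ⟨m₂, h21, h22, h23, h24⟩ := median G μ γ ν₂
  have e1 : G.rho μ γ ν₁ = G.rho μ γ m₁ := rho_median G h12 h13
  have e2 : G.rho μ γ ν₂ = G.rho μ γ m₂ := rho_median G h22 h23
  have i1 : G.pathSet μ ν₁ ∩ G.pathSet μ γ = G.pathSet μ m₁ := by
    rw [Finset.inter_comm]; exact h14
  have i2 : G.pathSet μ ν₂ ∩ G.pathSet μ γ = G.pathSet μ m₂ := by
    rw [Finset.inter_comm]; exact h24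
  rw [e1, e2, i1, i2, rho_lt_iff_dist G h11 h21, subset_iff_dist G h11 h21]

lemma main_part2 {μ γ : Fin G.N} (h : G.adj μ γ) :
    G.rho μ γ γ = (G.V γ μ + 1) / G.V μ μ := by
  have hid := adj_identity G h
  rw [rho_eq]
  have h1 := V_pos G μ γ
  have h2 := V_pos G μ μ
  rw [div_eq_div_iff (ne_of_gt h1) (ne_of_gt h2)]
  have hsym : G.V γ μ = G.V μ γ := V_symm G γ μ
  rw [hsym] at hid ⊢
  linarith [hid]

end DGAux
end

/-- `ρ_{[μ,γ]}` is strictly increasing along the path from `μ` to `γ` and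
constant on paths going away from it; if `μ ∼ γ` then
`ρ_{[μ,γ]}(γ) = (V_{γμ}+1)/V_{μμ}`. -/
theorem stmt4 (G : DualGraph) :
    (∀ μ γ ν₁ ν₂ : Fin G.N,
      (G.rho μ γ ν₁ < G.rho μ γ ν₂ ↔
        G.pathSet μ ν₁ ∩ G.pathSet μ γ ⊂ G.pathSet μ ν₂ ∩ G.pathSet μ γ)) ∧
    (∀ μ γ : Fin G.N, G.adj μ γ → G.rho μ γ γ = (G.V γ μ + 1) / G.V μ μ) := by
  exact ⟨fun μ γ ν₁ ν₂ => DGAux.main_part1 G μ γ ν₁ ν₂, fun μ γ h => DGAux.main_part2 G h⟩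
end
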